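/- arXiv:1203.0360 — 8 statements merged into one kernel-verified Lean document; each statement's English description precedes it below -/
import Mathlib

section
/- Let N be a positive integer, m an integer with 0 ≤ m ≤ N, and D_m = y(1+y)d²/dy² + [1-(N-1)y]d/dy + m(N-m). There exists a unique formal power series P_m over ℚ with D_m P_m = 0 and P_m(0) = 1, and P_m is a polynomial of degree exactly min(m, N-m). -/
open PowerSeries

/-- The differential operator `D_m = y(1+y) d²/dy² + [1-(N-1)y] d/dy + m(N-m)`
acting on formal power series over `ℚ`. -/
noncomputable def Dop (N m : ℕ) (u : PowerSeries ℚ) : PowerSeries ℚ :=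
  (PowerSeries.X * (1 + PowerSeries.X)) *
      (PowerSeries.derivative ℚ (PowerSeries.derivative ℚ u))
    + (1 - PowerSeries.C ((N : ℚ) - 1) * PowerSeries.X) * (PowerSeries.derivative ℚ u)
    + PowerSeries.C ((m : ℚ) * ((N : ℚ) - (m : ℚ))) * u

lemma coeff_Dop (N m : ℕ) (u : PowerSeries ℚ) (j : ℕ) :
    PowerSeries.coeff j (Dop N m u) =
      ((j:ℚ)+1)^2 * PowerSeries.coeff (j+1) u
        + ((m:ℚ)-(j:ℚ))*((N:ℚ)-(m:ℚ)-(j:ℚ)) * PowerSeries.coeff j u := by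
  have expand : Dop N m u =
      PowerSeries.X * (PowerSeries.derivative ℚ (PowerSeries.derivative ℚ u))
      + PowerSeries.X * (PowerSeries.X * (PowerSeries.derivative ℚ (PowerSeries.derivative ℚ u)))
      + (PowerSeries.derivative ℚ u
        - PowerSeries.C (N : ℚ) * (PowerSeries.X * PowerSeries.derivative ℚ u)
        + PowerSeries.X * PowerSeries.derivative ℚ u)
      + PowerSeries.C ((m : ℚ) * ((N : ℚ) - (m : ℚ))) * u := by
    unfold Dop; rw [map_sub, map_one]; ring
  rw [expand]
  match j with
  | 0 =>
    simp only [map_add, map_sub, PowerSeries.coeff_C_mul, PowerSeries.coeff_succ_X_mul,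
      PowerSeries.coeff_zero_X_mul, PowerSeries.coeff_derivative, mul_zero]
    push_cast
    ring
  | 1 =>
    simp only [map_add, map_sub, PowerSeries.coeff_C_mul, PowerSeries.coeff_succ_X_mul,
      PowerSeries.coeff_zero_X_mul, PowerSeries.coeff_derivative, mul_zero]
    push_cast
    ring
  | (n+2) =>
    simp only [map_add, map_sub, PowerSeries.coeff_C_mul, PowerSeries.coeff_succ_X_mul,
      PowerSeries.coeff_zero_X_mul, PowerSeries.coeff_derivative, mul_zero]
    push_cast
    ring

lemma dop_eq_zero_iff (N m : ℕ) (u : PowerSeries ℚ) :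
    Dop N m u = 0 ↔ ∀ j : ℕ, ((j:ℚ)+1)^2 * PowerSeries.coeff (j+1) u
        = -(((m:ℚ)-(j:ℚ))*((N:ℚ)-(m:ℚ)-(j:ℚ))) * PowerSeries.coeff j u := by
  constructor
  · intro h j
    have := congrArg (PowerSeries.coeff j) h
    rw [coeff_Dop] at this
    simp at this
    linarith [this]
  · intro h
    ext j
    rw [map_zero, coeff_Dop, h j]
    ring

/-- There is a unique formal power series `P_m` with `D_m P_m = 0` and `P_m(0) = 1`,
and every such series is a polynomial of degree exactly `min(m, N-m)`. -/
theorem exists_unique_Pm (N m : ℕ) (hN : 0 < N) (hm : m ≤ N) :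
    (∃! P : PowerSeries ℚ, Dop N m P = 0 ∧ PowerSeries.constantCoeff P = 1) ∧
      ∀ P : PowerSeries ℚ, Dop N m P = 0 → PowerSeries.constantCoeff P = 1 →
        (∀ j : ℕ, min m (N - m) < j → PowerSeries.coeff j P = 0) ∧
          PowerSeries.coeff (min m (N - m)) P ≠ 0 := by
  -- the recurrence coefficients
  set c : ℕ → ℚ := fun j => -(((m:ℚ)-(j:ℚ))*((N:ℚ)-(m:ℚ)-(j:ℚ))) / ((j:ℚ)+1)^2 with hc
  have hsq : ∀ j : ℕ, ((j:ℚ)+1)^2 ≠ 0 := by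
    intro j; positivity
  -- recurrence form
  have hrec : ∀ u : PowerSeries ℚ, Dop N m u = 0 →
      ∀ j : ℕ, PowerSeries.coeff (j+1) u = c j * PowerSeries.coeff j u := by
    intro u hu j
    have := (dop_eq_zero_iff N m u).1 hu j
    field_simp [hc]
    rw [hc]; dsimp only; rw [div_mul_eq_mul_div, eq_div_iff (hsq j)]
    linarith [this]
  -- the explicit solution
  let f : ℕ → ℚ := fun j => Nat.rec 1 (fun j x => c j * x) j
  have hf0 : f 0 = 1 := rfl
  have hfS : ∀ j, f (j+1) = c j * f j := fun j => rfl
  set P₀ : PowerSeries ℚ := PowerSeries.mk f with hP₀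
  have hP₀D : Dop N m P₀ = 0 := by
    rw [dop_eq_zero_iff]
    intro j
    rw [hP₀, PowerSeries.coeff_mk, PowerSeries.coeff_mk, hfS j, hc]
    field_simp
  have hP₀C : PowerSeries.constantCoeff P₀ = 1 := by
    rw [hP₀, ← PowerSeries.coeff_zero_eq_constantCoeff, PowerSeries.coeff_mk, hf0]
  -- uniqueness
  have huniq : ∀ Q : PowerSeries ℚ, Dop N m Q = 0 ∧ PowerSeries.constantCoeff Q = 1 →
      Q = P₀ := by
    rintro Q ⟨hQD, hQC⟩
    ext j
    induction j with
    | zero =>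
      rw [PowerSeries.coeff_zero_eq_constantCoeff, hQC]
      exact hP₀C.symm
    | succ n ih =>
      rw [hrec Q hQD n, ih, hP₀, PowerSeries.coeff_mk, PowerSeries.coeff_mk, hfS]
  refine ⟨⟨P₀, ⟨hP₀D, hP₀C⟩, huniq⟩, ?_⟩
  intro P hD hC
  set k := min m (N - m) with hk
  have hkm : k ≤ m := min_le_left _ _
  have hkNm : k ≤ N - m := min_le_right _ _
  have hNm : ((N - m : ℕ) : ℚ) = (N : ℚ) - m := by
    rw [Nat.cast_sub hm]
  -- the key factor vanishes at j = k
  have hck : c k = 0 := by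
    rw [hc]
    rcases min_cases m (N - m) with ⟨h1, _⟩ | ⟨h1, _⟩
    · rw [hk, h1]; simp
    · rw [hk, h1]
      have : (N : ℚ) - m - ((N - m : ℕ) : ℚ) = 0 := by rw [hNm]; ring
      simp [this]
  constructor
  · intro j hj
    -- coeff j P = 0 for j > k, by induction
    induction j with
    | zero => omega
    | succ n ih =>
      rcases Nat.lt_or_ge k n with h | h
      · rw [hrec P hD n, ih h, mul_zero]
      · have : n = k := by omega
        rw [hrec P hD n, this, hck, zero_mul]
  · -- coeff k P ≠ 0
    have key : ∀ j : ℕ, j ≤ k → PowerSeries.coeff j P ≠ 0 := by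
      intro j
      induction j with
      | zero =>
        intro _
        rw [PowerSeries.coeff_zero_eq_constantCoeff, hC]
        norm_num
      | succ n ih =>
        intro hnk
        have hn : n < k := by omega
        rw [hrec P hD n]
        have hcn : c n ≠ 0 := by
          rw [hc]
          have h1 : (m:ℚ) - n > 0 := by
            have : n < m := by omega
            have := Nat.cast_lt (α := ℚ) |>.2 this
            linarith
          have h2 : (N:ℚ) - m - n > 0 := by
            have : n < N - m := by omega
            have := Nat.cast_lt (α := ℚ) |>.2 this
            rw [hNm] at this
            linarith
          have := hsq n
          intro hzero
          rw [div_eq_zero_iff] at hzero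
          rcases hzero with h | h
          · nlinarith
          · exact this h
        exact mul_ne_zero hcn (ih (le_of_lt hn))
    exact key k le_rfl
end

section
/- Let x_1, x_2, ... be noncommuting indeterminates commuting with the variable s, and set X(s) = ∑_{N≥0} x_{N+1} s^N. For k ∈ ℤ define the operator L_k = s d²/ds² − k d/ds + X(s), acting on (noncommutative-coefficient) formal power series in s, where X(s) acts by left multiplication. Then for every N ≥ 1, evaluating at s = 0: L_{1−N} L_{3−N} ⋯ L_{N−3} L_{N−1} 1 |_{s=0} = ∑_{|I|=N} n̄_I · x_{I_1} x_{I_2} ⋯ x_{I_r}, where the sum runs over all compositions I = (I_1,...,I_r) of N, and n̄_I = (N−1)!² / ∏_{k=1}^{r−1} ((∑_{j=1}^k I_j)(∑_{j=k+1}^r I_j)). -/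
open Finset

/-- The operator `L_k = s d²/ds² - k d/ds + X(s)`, with `X(s) = ∑_{a≥1} x_a s^{a-1}` acting by
left multiplication, expressed on coefficient sequences of formal power series in a central
variable `s` over the free algebra `ℚ⟨x_1, x_2, ...⟩`.  If `u = ∑ u_j s^j` then
`(L_k u)_j = (j(j+1) - k(j+1)) u_{j+1} + ∑_{i=0}^{j} x_{i+1} u_{j-i}`. -/
noncomputable def Lop (k : ℤ) (u : ℕ → FreeAlgebra ℚ ℕ) : ℕ → FreeAlgebra ℚ ℕ :=
  fun j => (((j : ℚ) * ((j : ℚ) + 1) - (k : ℚ) * ((j : ℚ) + 1))) • u (j + 1)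
    + ∑ i ∈ Finset.range (j + 1), FreeAlgebra.ι ℚ (i + 1) * u (j - i)

/-- The constant `n̄_I = (N-1)!² / ∏_{k=1}^{r-1} (∑_{j≤k} I_j)(∑_{j>k} I_j)`. -/
noncomputable def nbar (N : ℕ) (I : List ℕ) : ℚ :=
  ((Nat.factorial (N - 1) : ℚ))^2 /
    ∏ k ∈ Finset.range (I.length - 1), (((I.take (k+1)).sum : ℚ) * ((I.drop (k+1)).sum : ℚ))


namespace CombThm
open Polynomial
variable {N : ℕ}



/-- exact quotient of `f - f(x)` by `X - C x`. -/
noncomputable def quot (x : ℚ) (f : ℚ[X]) : ℚ[X] :=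
  (f - C (f.eval x)) /ₘ (X - C x)

lemma quot_spec (x : ℚ) (f : ℚ[X]) :
    (X - C x) * quot x f = f - C (f.eval x) := by
  have h := modByMonic_add_div (f - C (f.eval x)) (X - C x)
  rw [modByMonic_X_sub_C_eq_C_eval] at h
  simp only [eval_sub, eval_C, sub_self, map_zero, zero_add] at h
  simpa [quot] using h

lemma quot_eq {x : ℚ} {f p : ℚ[X]} (h : (X - C x) * p = f - C (f.eval x)) :
    quot x f = p := by
  have h2 := quot_spec x f
  have : (X - C x) * quot x f = (X - C x) * p := by rw [h, h2]
  exact mul_left_cancel₀ (X_sub_C_ne_zero x) this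

lemma quot_add (x : ℚ) (f g : ℚ[X]) : quot x (f + g) = quot x f + quot x g := by
  refine quot_eq ?_
  rw [mul_add, quot_spec, quot_spec]
  simp only [eval_add, map_add]
  ring

lemma quot_C (x : ℚ) (a : ℚ) : quot x (C a) = 0 := by
  refine quot_eq ?_; simp

/-- divided difference of a polynomial along a list of nodes (first node peeled first). -/
noncomputable def dd : List ℚ → ℚ[X] → ℚ
  | [], _ => 0
  | [x], f => f.eval x
  | x :: y :: xs, f => dd (y :: xs) (quot x f)

@[simp] lemma dd_nil (f : ℚ[X]) : dd [] f = 0 := rfl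
@[simp] lemma dd_single (x : ℚ) (f : ℚ[X]) : dd [x] f = f.eval x := rfl
lemma dd_cons_cons (x y : ℚ) (xs : List ℚ) (f : ℚ[X]) :
    dd (x :: y :: xs) f = dd (y :: xs) (quot x f) := rfl

lemma dd_cons (x : ℚ) (xs : List ℚ) (hxs : xs ≠ []) (f : ℚ[X]) :
    dd (x :: xs) f = dd xs (quot x f) := by
  match xs with
  | [] => exact absurd rfl hxs
  | y :: ys => rfl

lemma dd_add : ∀ (xs : List ℚ) (f g : ℚ[X]), dd xs (f + g) = dd xs f + dd xs g
  | [], f, g => by simp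
  | [x], f, g => by simp
  | x :: y :: xs, f, g => by
      rw [dd_cons_cons, dd_cons_cons, dd_cons_cons, quot_add, dd_add]

lemma dd_C : ∀ (xs : List ℚ) (a : ℚ), dd xs (C a) = if xs.length = 1 then a else 0
  | [], a => by simp
  | [x], a => by simp
  | x :: y :: xs, a => by
      rw [dd_cons_cons, quot_C, show ((0:ℚ[X]) = C 0) by simp, dd_C]
      simp

lemma length_append_one {α : Type*} (xs : List α) (x : α) :
    (xs ++ [x]).length = 1 ↔ xs = [] := by
  cases xs <;> simp

/-- Leibniz rule for a linear factor, peeling the last node. -/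
lemma dd_linear_mul : ∀ (xs : List ℚ) (x c : ℚ) (g : ℚ[X]),
    dd (xs ++ [x]) ((X + C c) * g) = (x + c) * dd (xs ++ [x]) g + dd xs g
  | [], x, c, g => by simp [mul_comm]
  | z :: xs, x, c, g => by
      have hne : xs ++ [x] ≠ [] := by simp
      have key : quot z ((X + C c) * g) = (X + C c) * quot z g + C (g.eval z) := by
        refine quot_eq ?_
        have hq := quot_spec z g
        simp only [eval_mul, eval_add, eval_X, eval_C, C_mul, C_add]
        linear_combination (X + C c) * hq
      rw [show (z :: xs) ++ [x] = z :: (xs ++ [x]) from rfl,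
        dd_cons z _ hne, key, dd_add, dd_linear_mul, dd_C]
      rcases xs with _ | ⟨w, ws⟩
      · simp [dd_cons_cons]
      · have h2 : (w :: ws) ++ [x] ≠ [] := by simp
        rw [if_neg (by simp), dd_cons z _ h2, dd_cons_cons]
        ring

/-- if the factors corresponding to all but the last node divide `f`, the divided
difference is evaluation of the cofactor at the last node. -/
lemma dd_vanish : ∀ (xs : List ℚ) (x : ℚ) (g : ℚ[X]),
    dd (xs ++ [x]) (g * (xs.map (fun y => X - C y)).prod) = g.eval x
  | [], x, g => by simp
  | z :: xs, x, g => by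
      have hne : xs ++ [x] ≠ [] := by simp
      have key : quot z (g * ((z :: xs).map (fun y => X - C y)).prod)
          = g * (xs.map (fun y => X - C y)).prod := by
        refine quot_eq ?_
        simp only [List.map_cons, List.prod_cons]
        simp only [eval_mul, eval_sub, eval_X, eval_C, sub_self, zero_mul, mul_zero, map_zero,
          sub_zero]
        ring
      rw [show (z :: xs) ++ [x] = z :: (xs ++ [x]) by simp, dd_cons z _ hne, key, dd_vanish]



/-- Finset of compositions (lists of positive naturals) with sum `n`. -/
def comps : ℕ → Finset (List ℕ)
  | 0 => {[]}
  | (n+1) => (Finset.Icc 1 (n+1)).attach.biUnion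
      (fun a => (comps (n+1 - a.1)).image (fun l => a.1 :: l))
  decreasing_by
    have := a.2
    simp only [Finset.mem_Icc] at this
    omega

lemma mem_comps : ∀ (n : ℕ) (l : List ℕ),
    l ∈ comps n ↔ (∀ x ∈ l, 0 < x) ∧ l.sum = n := by
  intro n
  induction n using Nat.strong_induction_on with
  | _ n ih =>
    match n with
    | 0 =>
      intro l
      constructor
      · intro h
        simp only [comps, Finset.mem_singleton] at h
        subst h; simp
      · rintro ⟨hpos, hsum⟩
        cases l with
        | nil => simp [comps]
        | cons a l =>
          exfalso
          have := hpos a (by simp)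
          simp only [List.sum_cons] at hsum
          omega
    | (m+1) =>
      intro l
      rw [comps]
      simp only [Finset.mem_biUnion, Finset.mem_attach, Finset.mem_image, true_and,
        Subtype.exists]
      constructor
      · rintro ⟨a, ha, l', hl', rfl⟩
        simp only [Finset.mem_Icc] at ha
        rw [ih (m+1-a) (by omega)] at hl'
        refine ⟨?_, ?_⟩
        · intro x hx
          rcases List.mem_cons.1 hx with rfl | hx
          · omega
          · exact hl'.1 x hx
        · simp only [List.sum_cons, hl'.2]; omega
      · rintro ⟨hpos, hsum⟩
        cases l with
        | nil => simp at hsum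
        | cons a l' =>
          have ha : 0 < a := hpos a (by simp)
          simp only [List.sum_cons] at hsum
          refine ⟨a, Finset.mem_Icc.2 ⟨ha, by omega⟩, l', ?_, rfl⟩
          rw [ih (m+1-a) (by omega)]
          exact ⟨fun x hx => hpos x (by simp [hx]), by omega⟩

lemma comps_zero : comps 0 = {[]} := by rw [comps]

/-- sum over compositions of `n ≥ 1` decomposes along the first block -/
lemma sum_comps {M : Type*} [AddCommMonoid M] (n : ℕ) (hn : 1 ≤ n) (F : List ℕ → M) :
    ∑ l ∈ comps n, F l = ∑ a ∈ Finset.Icc 1 n, ∑ l' ∈ comps (n - a), F (a :: l') := by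
  obtain ⟨m, rfl⟩ := Nat.exists_eq_add_of_le hn
  rw [show 1 + m = m + 1 by omega, comps]
  rw [Finset.sum_biUnion]
  · rw [← Finset.sum_attach (Finset.Icc 1 (m+1))
      (fun a => ∑ l' ∈ comps (m + 1 - a), F (a :: l'))]
    refine Finset.sum_congr rfl ?_
    intro a _
    rw [Finset.sum_image]
    intro x _ y _ h
    exact (List.cons_injective h :)
  · intro a _ b _ hab
    refine Finset.disjoint_left.2 ?_
    intro l hl hl'
    simp only [Finset.mem_image] at hl hl'
    obtain ⟨u, _, rfl⟩ := hl
    obtain ⟨v, _, hv⟩ := hl'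
    apply hab
    have : a.1 = b.1 := (List.head_eq_of_cons_eq hv.symm :)
    exact Subtype.ext this


noncomputable def psi (N t : ℕ) : ℚ := ((1:ℚ) - t) * ((t:ℚ) - N - 1)

noncomputable def phi (N T : ℕ) : ℚ := (T:ℚ)^2 - (N:ℚ)*T

lemma psi_succ (N s : ℕ) : psi N (s+1) = - phi N s := by
  simp only [psi, phi]
  push_cast
  ring

noncomputable def Hm (N m : ℕ) : ℚ[X] := ∏ t ∈ Finset.Ioc 1 m, (X + C (psi N t))

lemma Hm_one (N : ℕ) : Hm N 1 = 1 := by simp [Hm]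

lemma Hm_succ (N m : ℕ) (hm : 1 ≤ m) :
    Hm N (m+1) = (X + C (psi N (m+1))) * Hm N m := by
  rw [Hm, Finset.prod_Ioc_succ_top (by omega), mul_comm, Hm]

noncomputable def nodes (N : ℕ) : List ℕ → List ℚ
  | [] => []
  | a :: l => nodes N l ++ [phi N (a + l.sum)]

@[simp] lemma nodes_nil (N : ℕ) : nodes N [] = [] := rfl
lemma nodes_cons (N a : ℕ) (l : List ℕ) :
    nodes N (a :: l) = nodes N l ++ [phi N (a + l.sum)] := rfl

def tset : List ℕ → Finset ℕ
  | [] => ∅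
  | a :: l => insert (a + l.sum + 1) (tset l)

@[simp] lemma tset_nil : tset [] = ∅ := rfl
lemma tset_cons (a : ℕ) (l : List ℕ) : tset (a :: l) = insert (a + l.sum + 1) (tset l) := rfl

lemma tset_le : ∀ (l : List ℕ), ∀ t ∈ tset l, t ≤ l.sum + 1
  | [], t, ht => by simp at ht
  | a :: l, t, ht => by
      rw [tset_cons, Finset.mem_insert] at ht
      rcases ht with rfl | ht
      · simp
      · have := tset_le l t ht
        simp only [List.sum_cons]
        omega

lemma tset_ge : ∀ (l : List ℕ), (∀ x ∈ l, 0 < x) → ∀ t ∈ tset l, 2 ≤ t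
  | [], _, t, ht => by simp at ht
  | a :: l, hpos, t, ht => by
      rw [tset_cons, Finset.mem_insert] at ht
      rcases ht with rfl | ht
      · have := hpos a (by simp); omega
      · exact tset_ge l (fun x hx => hpos x (by simp [hx])) t ht

lemma not_mem_tset (a : ℕ) (l : List ℕ) (ha : 0 < a) : a + l.sum + 1 ∉ tset l := by
  intro h
  have := tset_le l _ h
  omega

lemma tset_subset_Ioc (l : List ℕ) (hpos : ∀ x ∈ l, 0 < x) (m : ℕ) (hm : l.sum + 1 ≤ m) :
    tset l ⊆ Finset.Ioc 1 m := by
  intro t ht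
  have h1 := tset_ge l hpos t ht
  have h2 := tset_le l t ht
  simp only [Finset.mem_Ioc]
  omega

lemma nodes_prod_eq : ∀ (l : List ℕ), (∀ x ∈ l, 0 < x) →
    ((nodes N l).map (fun y => X - C y)).prod = ∏ t ∈ tset l, (X + C (psi N t))
  | [], _ => by simp
  | a :: l, hpos => by
      have ha : 0 < a := hpos a (by simp)
      rw [nodes_cons, List.map_append, List.prod_append, tset_cons,
        Finset.prod_insert (not_mem_tset a l ha),
        nodes_prod_eq l (fun x hx => hpos x (by simp [hx])),
        psi_succ]
      simp only [List.map_cons, List.map_nil, List.prod_cons, List.prod_nil, mul_one, map_neg,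
        sub_neg_eq_add]
      ring

lemma coef_vanish (m : ℕ) (a : ℕ) (l' : List ℕ) (hpos : ∀ x ∈ (a :: l'), 0 < x)
    (hsum : (a :: l').sum < m) : dd (nodes N (a :: l')) (Hm N m) = 0 := by
  have ha : 0 < a := hpos a (by simp)
  have hpos' : ∀ x ∈ l', 0 < x := fun x hx => hpos x (by simp [hx])
  have hs : a + l'.sum < m := by simpa using hsum
  have hsub : tset l' ⊆ Finset.Ioc 1 m := tset_subset_Ioc l' hpos' m (by omega)
  have hfac : Hm N m = (∏ t ∈ Finset.Ioc 1 m \ tset l', (X + C (psi N t))) *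
      ((nodes N l').map (fun y => X - C y)).prod := by
    rw [nodes_prod_eq l' hpos', Finset.prod_sdiff hsub, Hm]
  rw [nodes_cons, hfac, dd_vanish, Polynomial.eval_prod]
  refine Finset.prod_eq_zero (i := a + l'.sum + 1) ?_ ?_
  · simp only [Finset.mem_sdiff, Finset.mem_Ioc]
    refine ⟨⟨by omega, by omega⟩, ?_⟩
    exact not_mem_tset a l' ha
  · simp [psi_succ]

lemma prod_Ioc_pred (N : ℕ) (hN : 1 ≤ N) :
    ∏ t ∈ Finset.Ioc 1 N, (t - 1) = Nat.factorial (N-1) := by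
  have h : Finset.Ico 1 ((N-1)+1) = Finset.Ico 1 N := by congr 1; omega
  rw [← Finset.prod_Ico_id_eq_factorial (N-1), h]
  refine Finset.prod_nbij' (fun t => t - 1) (fun s => s + 1) ?_ ?_ ?_ ?_ ?_
  · intro t ht; simp only [Finset.mem_Ioc] at ht; simp only [Finset.mem_Ico]; omega
  · intro s hs; simp only [Finset.mem_Ico] at hs; simp only [Finset.mem_Ioc]; omega
  · intro t ht; simp only [Finset.mem_Ioc] at ht; show t - 1 + 1 = t; omega
  · intro s hs; simp only [Finset.mem_Ico] at hs; show s + 1 - 1 = s; omega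
  · intro t ht; rfl

lemma prod_Ioc_reflect (N : ℕ) (hN : 1 ≤ N) :
    ∏ t ∈ Finset.Ioc 1 N, (N + 1 - t) = Nat.factorial (N-1) := by
  have h : Finset.Ico 1 ((N-1)+1) = Finset.Ico 1 N := by congr 1; omega
  rw [← Finset.prod_Ico_id_eq_factorial (N-1), h]
  refine Finset.prod_nbij' (fun t => N + 1 - t) (fun s => N + 1 - s) ?_ ?_ ?_ ?_ ?_
  · intro t ht; simp only [Finset.mem_Ioc] at ht; simp only [Finset.mem_Ico]; omega
  · intro s hs; simp only [Finset.mem_Ico] at hs; simp only [Finset.mem_Ioc]; omega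
  · intro t ht; simp only [Finset.mem_Ioc] at ht; show N + 1 - (N + 1 - t) = t; omega
  · intro s hs; simp only [Finset.mem_Ico] at hs; show N + 1 - (N + 1 - s) = s; omega
  · intro t ht; rfl

lemma prod_psi_Ioc (N : ℕ) (hN : 1 ≤ N) :
    ∏ t ∈ Finset.Ioc 1 N, psi N t = ((Nat.factorial (N-1) : ℕ) : ℚ)^2 := by
  have h1 : ∀ t ∈ Finset.Ioc 1 N, psi N t = (((t - 1) * (N + 1 - t) : ℕ) : ℚ) := by
    intro t ht
    simp only [Finset.mem_Ioc] at ht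
    have h2 : ((t - 1 : ℕ) : ℚ) = (t : ℚ) - 1 := by
      push_cast [Nat.cast_sub (by omega : 1 ≤ t)]; ring
    have h3 : ((N + 1 - t : ℕ) : ℚ) = (N : ℚ) + 1 - t := by
      push_cast [Nat.cast_sub (by omega : t ≤ N + 1)]; ring
    push_cast [h2, h3, psi]
    ring
  rw [Finset.prod_congr rfl h1, ← Nat.cast_prod, Finset.prod_mul_distrib,
    prod_Ioc_pred N hN, prod_Ioc_reflect N hN]
  push_cast
  ring

lemma psi_eval (N T : ℕ) : psi N (T + 1) = (T : ℚ) * ((N : ℚ) - T) := by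
  simp only [psi]; push_cast; ring

lemma prod_tset_psi : ∀ (l' : List ℕ), (∀ x ∈ l', 0 < x) → ∀ a : ℕ, 0 < a →
    a + l'.sum = N →
    ∏ t ∈ tset l', psi N t
      = ∏ k ∈ Finset.range l'.length,
          ((((a :: l').take (k+1)).sum : ℚ) * (((a :: l').drop (k+1)).sum : ℚ))
  | [], _, a, _, _ => by simp
  | b :: l'', hpos, a, ha, hsum => by
      have hb : 0 < b := hpos b (by simp)
      have hpos'' : ∀ x ∈ l'', 0 < x := fun x hx => hpos x (by simp [hx])
      rw [tset_cons, Finset.prod_insert (not_mem_tset b l'' hb), List.length_cons,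
        Finset.prod_range_succ']
      have hsum' : (a + b) + l''.sum = N := by
        simp only [List.sum_cons] at hsum; omega
      have e0 : psi N (b + l''.sum + 1) = (((a :: b :: l'').take 1).sum : ℚ) *
          (((a :: b :: l'').drop 1).sum : ℚ) := by
        rw [psi_eval]
        have : ((N : ℚ) - (b + l''.sum : ℕ)) = (a : ℚ) := by
          have : (a : ℚ) + ((b + l''.sum : ℕ) : ℚ) = (N : ℚ) := by
            push_cast
            push_cast [← hsum']
            ring
          linarith
        rw [this]
        simp only [List.take, List.drop, List.sum_cons, List.sum_nil, add_zero]
        push_cast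
        ring
      have etail : ∀ k ∈ Finset.range l''.length,
          ((((a+b) :: l'').take (k+1)).sum : ℚ) * ((((a+b) :: l'').drop (k+1)).sum : ℚ)
          = (((a :: b :: l'').take (k+1+1)).sum : ℚ) * (((a :: b :: l'').drop (k+1+1)).sum : ℚ) := by
        intro k _
        simp only [List.take_succ_cons, List.drop_succ_cons, List.sum_cons]
        push_cast
        ring
      rw [prod_tset_psi l'' hpos'' (a+b) (by omega) hsum', Finset.prod_congr rfl etail, e0]
      ring

lemma phi_self (N : ℕ) : phi N N = 0 := by simp [phi]; ring

lemma coef_final (N : ℕ) (hN : 1 ≤ N) (a : ℕ) (l' : List ℕ)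
    (hpos : ∀ x ∈ (a :: l'), 0 < x) (hsum : (a :: l').sum = N) :
    dd (nodes N (a :: l')) (Hm N N) = nbar N (a :: l') := by
  have ha : 0 < a := hpos a (by simp)
  have hpos' : ∀ x ∈ l', 0 < x := fun x hx => hpos x (by simp [hx])
  have hs : a + l'.sum = N := by simpa using hsum
  have hsub : tset l' ⊆ Finset.Ioc 1 N := tset_subset_Ioc l' hpos' N (by omega)
  have hfac : Hm N N = (∏ t ∈ Finset.Ioc 1 N \ tset l', (X + C (psi N t))) *
      ((nodes N l').map (fun y => X - C y)).prod := by
    rw [nodes_prod_eq l' hpos', Finset.prod_sdiff hsub, Hm]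
  rw [nodes_cons, hfac, dd_vanish, hs, phi_self, Polynomial.eval_prod]
  simp only [eval_add, eval_X, eval_C, zero_add]
  have hmul : (∏ t ∈ Finset.Ioc 1 N \ tset l', psi N t) * (∏ t ∈ tset l', psi N t)
      = ((Nat.factorial (N-1) : ℕ) : ℚ)^2 := by
    rw [Finset.prod_sdiff hsub, prod_psi_Ioc N hN]
  rw [prod_tset_psi l' hpos' a ha hs] at hmul
  have hD : (∏ k ∈ Finset.range l'.length,
      ((((a :: l').take (k+1)).sum : ℚ) * (((a :: l').drop (k+1)).sum : ℚ))) ≠ 0 := by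
    apply Finset.prod_ne_zero_iff.2
    intro k hk
    simp only [Finset.mem_range] at hk
    have h1 : 0 < ((a :: l').take (k+1)).sum := by
      have : a ∈ (a :: l').take (k+1) := by simp [List.take_succ_cons]
      exact lt_of_lt_of_le ha (List.single_le_sum (fun x _ => Nat.zero_le x) _ this)
    have h2 : 0 < ((a :: l').drop (k+1)).sum := by
      rw [List.drop_succ_cons]
      have hne : l'.drop k ≠ [] := by
        intro h
        have := List.drop_eq_nil_iff.1 h
        omega
      obtain ⟨y, hy⟩ := List.exists_mem_of_ne_nil _ hne
      have hy' : y ∈ l' := List.mem_of_mem_drop hy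
      exact lt_of_lt_of_le (hpos' y hy') (List.single_le_sum (fun x _ => Nat.zero_le x) _ hy)
    positivity
  have hlen : (a :: l').length - 1 = l'.length := by simp
  rw [nbar, hlen, eq_div_iff hD]
  exact hmul

lemma nodes_length (N : ℕ) : ∀ l : List ℕ, (nodes N l).length = l.length
  | [] => rfl
  | a :: l => by
      rw [nodes_cons, List.length_append, nodes_length N l]
      simp

lemma dd_one (xs : List ℚ) : dd xs 1 = if xs.length = 1 then 1 else 0 := by
  have h : (1 : ℚ[X]) = C 1 := by simp
  rw [h, dd_C]

lemma coef_succ (N m : ℕ) (hm : 1 ≤ m) (a : ℕ) (l' : List ℕ) :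
    dd (nodes N (a :: l')) (Hm N (m+1))
      = (phi N (a + l'.sum) + psi N (m+1)) * dd (nodes N (a :: l')) (Hm N m)
        + dd (nodes N l') (Hm N m) := by
  rw [Hm_succ N m hm, nodes_cons, dd_linear_mul, ← nodes_cons]

lemma scalar_eq (N m j : ℕ) :
    (j : ℚ) * ((j : ℚ) + 1) - ((((N : ℤ) - 1 - 2 * (m : ℤ)) : ℤ) : ℚ) * ((j : ℚ) + 1)
      = phi N (m + 1 + j) + psi N (m + 1) := by
  simp only [phi, psi]
  push_cast
  ring

lemma state_eq (N : ℕ) (m : ℕ) (hm : 1 ≤ m) : ∀ j,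
    ((List.range m).foldl (fun u i => Lop ((N : ℤ) - 1 - 2 * (i : ℤ)) u)
        (fun j => if j = 0 then 1 else 0)) j
      = ∑ l ∈ comps (m + j),
          dd (nodes N l) (Hm N m) • ((l.map (FreeAlgebra.ι ℚ)).prod) := by
  induction m, hm using Nat.le_induction with
  | base =>
    intro j
    simp only [bind_pure_comp, List.map_eq_map, show List.range 1 = [0] from rfl,
      List.map_cons, List.map_nil, List.foldl_cons, List.foldl_nil, Lop]
    rw [Finset.sum_eq_single_of_mem j (Finset.self_mem_range_succ j) ?_]
    swap
    · intro b hb hbj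
      simp only [Finset.mem_range] at hb
      rw [if_neg (by omega)]
      simp
    simp only [Nat.sub_self, if_pos rfl, mul_one, if_neg (Nat.succ_ne_zero j), smul_zero,
      zero_add]
    rw [sum_comps (1+j) (by omega)]
    rw [Finset.sum_eq_single_of_mem (1+j) (Finset.mem_Icc.2 ⟨by omega, le_refl _⟩)
      (by intro a ha hane
          simp only [Finset.mem_Icc] at ha
          refine Finset.sum_eq_zero ?_
          intro l' hl'
          have hl'2 := (mem_comps _ l').1 hl'
          have hne : l' ≠ [] := by
            intro h; subst h; simp only [List.sum_nil] at hl'2; omega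
          rw [Hm_one, dd_one, if_neg, zero_smul]
          rw [nodes_length]
          cases l' with
          | nil => exact absurd rfl hne
          | cons b t => simp)]
    have hl : (nodes N [1 + j]).length = 1 := by simp [nodes_length]
    rw [Nat.sub_self, comps_zero, Finset.sum_singleton, Hm_one, dd_one, if_pos hl, one_smul]
    simp [Nat.add_comm 1 j]
  | succ m hm ih =>
    intro j
    simp only [bind_pure_comp, List.map_eq_map] at ih
    simp only [bind_pure_comp, List.map_eq_map, List.range_succ, List.map_append,
      List.foldl_append, List.map_cons, List.map_nil, List.foldl_cons, List.foldl_nil, Lop]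
    rw [scalar_eq N m j]
    simp only [ih]
    rw [show m + 1 + j = m + (j+1) from by omega]
    have hn1 : 1 ≤ m + (j + 1) := by omega
    rw [sum_comps (m + (j+1)) hn1
      (fun l => dd (nodes N l) (Hm N (m+1)) • ((l.map (FreeAlgebra.ι ℚ)).prod))]
    have inner_eq : ∀ a ∈ Finset.Icc 1 (m + (j+1)),
        (∑ l' ∈ comps (m + (j+1) - a),
          dd (nodes N (a :: l')) (Hm N (m+1)) • (((a :: l').map (FreeAlgebra.ι ℚ)).prod))
        = ∑ l' ∈ comps (m + (j+1) - a),
            ((phi N (m + (j+1)) + psi N (m+1)) •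
              (dd (nodes N (a :: l')) (Hm N m) •
                (FreeAlgebra.ι ℚ a * (l'.map (FreeAlgebra.ι ℚ)).prod))
            + dd (nodes N l') (Hm N m) •
                (FreeAlgebra.ι ℚ a * (l'.map (FreeAlgebra.ι ℚ)).prod)) := by
      intro a ha
      simp only [Finset.mem_Icc] at ha
      refine Finset.sum_congr rfl ?_
      intro l' hl'
      have hl'2 := (mem_comps _ l').1 hl'
      have hsum : a + l'.sum = m + (j+1) := by rw [hl'2.2]; omega
      rw [coef_succ N m hm, hsum, List.map_cons, List.prod_cons, add_smul, mul_smul]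
    rw [Finset.sum_congr rfl inner_eq]
    simp only [Finset.sum_add_distrib]
    simp only [← Finset.smul_sum]
    congr 1
    · congr 1
      rw [sum_comps (m + (j+1)) hn1
        (fun l => dd (nodes N l) (Hm N m) • ((l.map (FreeAlgebra.ι ℚ)).prod))]
      refine Finset.sum_congr rfl ?_
      intro a _
      refine Finset.sum_congr rfl ?_
      intro l' _
      simp [List.map_cons, List.prod_cons]
    · -- second piece: split off vanishing tail and reindex
      rw [show Finset.Icc 1 (m + (j+1)) = Finset.Ioc 0 (m + (j+1)) from Finset.Icc_add_one_left_eq_Ioc 0 _,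
        ← Finset.sum_Ioc_consecutive _ (Nat.zero_le (j+1)) (by omega : j+1 ≤ m + (j+1))]
      have hvan : (∑ a ∈ Finset.Ioc (j+1) (m + (j+1)),
          ∑ l' ∈ comps (m + (j+1) - a),
            dd (nodes N l') (Hm N m) •
              (FreeAlgebra.ι ℚ a * (l'.map (FreeAlgebra.ι ℚ)).prod)) = 0 := by
        refine Finset.sum_eq_zero ?_
        intro a ha
        simp only [Finset.mem_Ioc] at ha
        refine Finset.sum_eq_zero ?_
        intro l' hl'
        have hl'2 := (mem_comps _ l').1 hl'
        cases l' with
        | nil => simp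
        | cons b t =>
          rw [coef_vanish m b t hl'2.1 (by rw [hl'2.2]; omega), zero_smul]
      rw [hvan, add_zero]
      refine Finset.sum_nbij' (fun i => i + 1) (fun a => a - 1) ?_ ?_ ?_ ?_ ?_
      · intro i hi; simp only [Finset.mem_range] at hi; simp only [Finset.mem_Ioc]; omega
      · intro a ha; simp only [Finset.mem_Ioc] at ha; simp only [Finset.mem_range]; omega
      · intro i hi; show i + 1 - 1 = i; omega
      · intro a ha; simp only [Finset.mem_Ioc] at ha; show a - 1 + 1 = a; omega
      · intro i hi
        simp only [Finset.mem_range] at hi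
        show _ = ∑ l' ∈ comps (m + (j + 1) - (i+1)), _
        rw [show m + (j + 1) - (i + 1) = m + (j - i) from by omega, Finset.mul_sum]
        refine Finset.sum_congr rfl ?_
        intro l' _
        rw [mul_smul_comm]

lemma sum_composition {M : Type*} [AddCommMonoid M] (n : ℕ) (F : List ℕ → M) :
    (∑ c : Composition n, F c.blocks) = ∑ l ∈ comps n, F l := by
  refine Finset.sum_bij' (fun c _ => c.blocks)
    (fun l hl => ⟨l, fun hi => ((mem_comps n l).1 hl).1 _ hi, ((mem_comps n l).1 hl).2⟩)
    ?_ ?_ ?_ ?_ ?_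
  · intro c _
    exact (mem_comps n c.blocks).2 ⟨fun x hx => c.blocks_pos hx, c.blocks_sum⟩
  · intro l hl
    exact Finset.mem_univ _
  · intro c _
    cases c
    rfl
  · intro l hl
    rfl
  · intro c _
    rfl

end CombThm

/-- Theorem `combthm`:
`L_{1-N} L_{3-N} ⋯ L_{N-3} L_{N-1} 1 |_{s=0} = ∑_{|I|=N} n̄_I x_{I_1} ⋯ x_{I_r}`,
the sum being over all compositions `I` of `N`. -/
theorem Lop_iterate_one (N : ℕ) (hN : 1 ≤ N) :
    ((List.range N).foldl (fun u i => Lop ((N : ℤ) - 1 - 2 * (i : ℤ)) u)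
        (fun j => if j = 0 then 1 else 0)) 0
      = ∑ c : Composition N, nbar N c.blocks • (c.blocks.map (FreeAlgebra.ι ℚ)).prod := by
  have h := CombThm.state_eq N N hN 0
  rw [Nat.add_zero] at h
  rw [h, CombThm.sum_composition N
    (fun l => nbar N l • ((l.map (FreeAlgebra.ι ℚ)).prod))]
  refine Finset.sum_congr rfl ?_
  intro l hl
  have hl2 := (CombThm.mem_comps N l).1 hl
  cases l with
  | nil => simp only [List.sum_nil] at hl2; omega
  | cons a l' =>
    rw [CombThm.coef_final N hN a l' hl2.1 hl2.2]
end

section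
/- Krattenthaler's identity (specialized case X = Y = −b): Let s ≥ 1, K_1, ..., K_s positive integers, and b a rational (or formal) parameter such that all denominators below are nonzero. For each subset A = {a_1 < ⋯ < a_{r−1}} of {1,...,s−1} (including the empty set, giving r = 1), define the compositions J_1 = (K_1,...,K_{a_1}), J_2 = (K_{a_1+1},...,K_{a_2}), ..., J_r = (K_{a_{r−1}+1},...,K_s), and I = (|J_1|,...,|J_r|). Then ∑_{A ⊆ {1,...,s−1}} (−1)^r I_1 ⋯ I_r · (∏_{a∈A}(K_a + K_{a+1})) / (∏_{i=1}^{r−1} (∑_{k=1}^i I_k)(∑_{k=i+1}^r I_k + b)) = −b|K| / (|K| − K_1 + b), where |K| = K_1 + ⋯ + K_s. -/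
open Finset

/-- Block boundaries `0 = p_0 < p_1 < ⋯ < p_{r-1} < p_r = s` determined by a subset
`A = {a_1 < ⋯ < a_{r-1}} ⊆ {1, ..., s-1}` of splitting positions. -/
def bnds (s : ℕ) (A : Finset ℕ) : List ℕ := 0 :: (A.sort (· ≤ ·) ++ [s])

/-- `I_i = |J_i| = K_{p_{i-1}+1} + ⋯ + K_{p_i}`, the sum of the `i`-th block of
`(K_1, ..., K_s)` split at the positions of `A` (for `1 ≤ i ≤ r = |A| + 1`). -/
def blockI (K : ℕ → ℕ) (s : ℕ) (A : Finset ℕ) (i : ℕ) : ℕ :=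
  ∑ k ∈ Finset.Icc ((bnds s A).getD (i-1) 0 + 1) ((bnds s A).getD i 0), K k

section Aux

lemma sort_insert_max {a : ℕ} {A : Finset ℕ} (h : ∀ x ∈ A, x < a) :
    (insert a A).sort (· ≤ ·) = A.sort (· ≤ ·) ++ [a] := by
  have ha : a ∉ A := fun hx => lt_irrefl a (h a hx)
  have hperm : List.Perm ((insert a A).sort (· ≤ ·)) (A.sort (· ≤ ·) ++ [a]) := by
    refine ((insert a A).sort_perm_toList _).trans ?_
    refine (Finset.toList_insert ha).trans ?_
    exact (List.Perm.cons a ((A.sort_perm_toList _).symm)).trans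
      (List.perm_append_comm (l₁ := [a]) (l₂ := A.sort (· ≤ ·)))
  have hs1 : List.Pairwise (· ≤ ·) ((insert a A).sort (· ≤ ·)) := Finset.pairwise_sort _ _
  have hs2 : List.Pairwise (· ≤ ·) (A.sort (· ≤ ·) ++ [a]) := by
    rw [List.pairwise_append]
    refine ⟨Finset.pairwise_sort _ _, List.pairwise_singleton _ a, ?_⟩
    intro x hx y hy
    rw [List.mem_singleton] at hy
    subst hy
    exact le_of_lt (h x (Finset.mem_sort (· ≤ ·) |>.mp hx))
  exact List.Perm.eq_of_pairwise' hs1 hs2 hperm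

lemma exists_max_decomp {A : Finset ℕ} (hA : A.Nonempty) :
    A.sup id ∈ A ∧ ∀ x ∈ A, x ≤ A.sup id := by
  obtain ⟨m, hm, hsup⟩ := Finset.exists_mem_eq_sup A hA id
  exact ⟨hsup ▸ hm, fun x hx => Finset.le_sup (f := id) hx⟩

lemma sum_powerset_split (s : ℕ) (f : Finset ℕ → ℚ) :
    ∑ A ∈ (Finset.Icc 1 (s-1)).powerset, f A
      = f ∅ + ∑ a ∈ Finset.Icc 1 (s-1), ∑ A' ∈ (Finset.Icc 1 (a-1)).powerset, f (insert a A') := by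
  have h0 : (∅ : Finset ℕ) ∈ (Finset.Icc 1 (s-1)).powerset := by simp
  rw [← Finset.add_sum_erase _ f h0]
  congr 1
  rw [Finset.sum_sigma']
  refine Finset.sum_nbij' (fun A => ⟨A.sup id, A.erase (A.sup id)⟩)
    (fun p => insert p.1 p.2) ?_ ?_ ?_ ?_ ?_
  · intro A hA
    simp only [Finset.mem_erase, Finset.mem_powerset] at hA
    obtain ⟨hne, hsub⟩ := hA
    have hAne : A.Nonempty := Finset.nonempty_iff_ne_empty.mpr hne
    obtain ⟨hmem, hle⟩ := exists_max_decomp hAne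
    have hI := hsub hmem
    simp only [Finset.mem_Icc] at hI
    simp only [Finset.mem_sigma, Finset.mem_Icc, Finset.mem_powerset]
    refine ⟨⟨hI.1, hI.2⟩, ?_⟩
    intro x hx
    simp only [Finset.mem_erase] at hx
    have hx1 := hsub hx.2
    simp only [Finset.mem_Icc] at hx1 ⊢
    exact ⟨hx1.1, Nat.le_sub_one_of_lt (lt_of_le_of_ne (hle x hx.2) hx.1)⟩
  · intro p hp
    simp only [Finset.mem_sigma, Finset.mem_Icc, Finset.mem_powerset] at hp
    obtain ⟨⟨h1, h2⟩, hsub⟩ := hp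
    simp only [Finset.mem_erase, Finset.mem_powerset]
    constructor
    · exact Finset.nonempty_iff_ne_empty.mp ⟨p.1, Finset.mem_insert_self _ _⟩
    · intro x hx
      rcases Finset.mem_insert.mp hx with h | h
      · subst h; simp only [Finset.mem_Icc]; exact ⟨h1, h2⟩
      · have := hsub h
        simp only [Finset.mem_Icc] at this ⊢
        exact ⟨this.1, le_trans this.2 (le_trans (Nat.sub_le _ _) h2)⟩
  · intro A hA
    simp only [Finset.mem_erase, Finset.mem_powerset] at hA
    have hAne : A.Nonempty := Finset.nonempty_iff_ne_empty.mpr hA.1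
    exact Finset.insert_erase (exists_max_decomp hAne).1
  · intro p hp
    simp only [Finset.mem_sigma, Finset.mem_Icc, Finset.mem_powerset] at hp
    obtain ⟨⟨h1, h2⟩, hsub⟩ := hp
    have hlt : ∀ x ∈ p.2, x < p.1 := by
      intro x hx
      have := hsub hx
      simp only [Finset.mem_Icc] at this
      exact lt_of_le_of_lt this.2 (Nat.sub_lt h1 one_pos)
    have hna : p.1 ∉ p.2 := fun hx => lt_irrefl _ (hlt _ hx)
    have hsup : (insert p.1 p.2).sup id = p.1 := by
      apply le_antisymm
      · apply Finset.sup_le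
        intro x hx
        rcases Finset.mem_insert.mp hx with h | h
        · exact le_of_eq h
        · exact le_of_lt (hlt x h)
      · exact Finset.le_sup (f := id) (Finset.mem_insert_self _ _)
    ext1
    · simp [hsup]
    · simp only [hsup, heq_eq_eq]
      exact Finset.erase_insert hna
  · intro A hA
    simp only [Finset.mem_erase, Finset.mem_powerset] at hA
    have hAne : A.Nonempty := Finset.nonempty_iff_ne_empty.mpr hA.1
    rw [Finset.insert_erase (exists_max_decomp hAne).1]

lemma length_bnds (s : ℕ) (A : Finset ℕ) : (bnds s A).length = A.card + 2 := by
  simp [bnds]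

lemma bnds_insert {a s : ℕ} {A : Finset ℕ} (h : ∀ x ∈ A, x < a) :
    bnds s (insert a A) = bnds a A ++ [s] := by
  simp [bnds, sort_insert_max h]

lemma getD_bnds_last (s : ℕ) (A : Finset ℕ) : (bnds s A).getD (A.card + 1) 0 = s := by
  have : bnds s A = (0 :: A.sort (· ≤ ·)) ++ [s] := by simp [bnds]
  rw [this, List.getD_append_right]
  · simp
  · simp

lemma getD_bnds_insert {a s : ℕ} {A : Finset ℕ} (h : ∀ x ∈ A, x < a) {i : ℕ}
    (hi : i ≤ A.card + 1) :
    (bnds s (insert a A)).getD i 0 = (bnds a A).getD i 0 := by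
  rw [bnds_insert h, List.getD_append]
  rw [length_bnds]
  omega

lemma blockI_insert {a s : ℕ} {A : Finset ℕ} (h : ∀ x ∈ A, x < a) (K : ℕ → ℕ) {i : ℕ}
    (hi : i ≤ A.card + 1) :
    blockI K s (insert a A) i = blockI K a A i := by
  unfold blockI
  rw [getD_bnds_insert h hi, getD_bnds_insert h (le_trans (Nat.sub_le _ _) hi)]

lemma blockI_insert_top {a s : ℕ} {A : Finset ℕ} (h : ∀ x ∈ A, x < a) (K : ℕ → ℕ) :
    blockI K s (insert a A) (A.card + 2) = ∑ k ∈ Finset.Icc (a+1) s, K k := by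
  have ha : a ∉ A := fun hx => lt_irrefl a (h a hx)
  have h1 : (bnds s (insert a A)).getD (A.card + 1) 0 = a := by
    rw [getD_bnds_insert h le_rfl, getD_bnds_last]
  have h2 : (bnds s (insert a A)).getD (A.card + 2) 0 = s := by
    have := getD_bnds_last s (insert a A)
    rwa [Finset.card_insert_of_notMem ha] at this
  unfold blockI
  rw [show A.card + 2 - 1 = A.card + 1 from rfl, h1, h2]

lemma blockI_empty (K : ℕ → ℕ) (s : ℕ) : blockI K s ∅ 1 = ∑ k ∈ Finset.Icc 1 s, K k := by
  unfold blockI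
  simp [bnds]

lemma Icc_succ_left' (m n : ℕ) : Finset.Icc (m+1) n = Finset.Ioc m n := by
  ext x
  simp only [Finset.mem_Icc, Finset.mem_Ioc]
  omega

lemma Icc_insert_left {m n : ℕ} (h : m ≤ n) :
    Finset.Icc m n = insert m (Finset.Icc (m+1) n) := by
  ext x
  simp only [Finset.mem_Icc, Finset.mem_insert]
  omega

lemma sum_Icc_split (K : ℕ → ℕ) {a s : ℕ} (has : a ≤ s) :
    (∑ k ∈ Finset.Icc 1 a, (K k : ℚ)) + (∑ k ∈ Finset.Icc (a+1) s, (K k : ℚ))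
      = ∑ k ∈ Finset.Icc 1 s, (K k : ℚ) := by
  rw [show (1:ℕ) = 0 + 1 from rfl, Icc_succ_left', Icc_succ_left', Icc_succ_left']
  exact Finset.sum_Ioc_consecutive _ (Nat.zero_le a) has

lemma tel (g : ℕ → ℚ) (n : ℕ) : ∑ a ∈ Finset.Icc 1 n, (g (a-1) - g a) = g 0 - g n := by
  induction n with
  | zero => simp
  | succ n ih =>
    rw [Finset.sum_Icc_succ_top (Nat.le_add_left 1 n), ih]
    simp

/-- The summand. -/
def trm (K : ℕ → ℕ) (s : ℕ) (b : ℚ) (A : Finset ℕ) : ℚ :=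
  ((-1 : ℚ))^(A.card + 1) * (∏ i ∈ Finset.Icc 1 (A.card + 1), (blockI K s A i : ℚ)) *
    (∏ a ∈ A, ((K a : ℚ) + (K (a+1) : ℚ))) /
    (∏ i ∈ Finset.Icc 1 A.card,
      ((∑ k ∈ Finset.Icc 1 ((bnds s A).getD i 0), (K k : ℚ)) *
        ((∑ k ∈ Finset.Icc 1 s, (K k : ℚ))
          - (∑ k ∈ Finset.Icc 1 ((bnds s A).getD i 0), (K k : ℚ)) + b)))

lemma alg_helper (sgn n1 q e E d1 p qb : ℚ) :
    sgn * (-1) * (n1 * q) * (e * E) / (d1 * (p * qb))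
      = -(q * e / (p * qb)) * (sgn * n1 * E / d1) := by
  rcases eq_or_ne d1 0 with h | h
  · simp [h]
  rcases eq_or_ne p 0 with h2 | h2
  · simp [h2]
  rcases eq_or_ne qb 0 with h3 | h3
  · simp [h3]
  field_simp

lemma trm_empty (K : ℕ → ℕ) (s : ℕ) (b : ℚ) :
    trm K s b ∅ = -(∑ k ∈ Finset.Icc 1 s, (K k : ℚ)) := by
  unfold trm
  have : (∅ : Finset ℕ).card = 0 := rfl
  rw [this]
  simp [blockI_empty]

lemma trm_insert (K : ℕ → ℕ) {s a : ℕ} (b : ℚ) {A' : Finset ℕ} (ha1 : 1 ≤ a) (has : a ≤ s)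
    (hA' : A' ⊆ Finset.Icc 1 (a-1)) :
    trm K s b (insert a A') =
      -((∑ k ∈ Finset.Icc (a+1) s, (K k : ℚ)) * ((K a : ℚ) + (K (a+1) : ℚ))
          / ((∑ k ∈ Finset.Icc 1 a, (K k : ℚ))
              * ((∑ k ∈ Finset.Icc (a+1) s, (K k : ℚ)) + b)))
        * trm K a ((∑ k ∈ Finset.Icc (a+1) s, (K k : ℚ)) + b) A' := by
  have hlt : ∀ x ∈ A', x < a := by
    intro x hx
    have := hA' hx
    simp only [Finset.mem_Icc] at this
    omega
  have ha : a ∉ A' := fun hx => lt_irrefl a (hlt a hx)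
  have hsplit : (∑ k ∈ Finset.Icc 1 a, (K k : ℚ)) + (∑ k ∈ Finset.Icc (a+1) s, (K k : ℚ))
      = ∑ k ∈ Finset.Icc 1 s, (K k : ℚ) := sum_Icc_split K has
  unfold trm
  rw [Finset.card_insert_of_notMem ha]
  have hnum : ∏ i ∈ Finset.Icc 1 (A'.card + 1 + 1), (blockI K s (insert a A') i : ℚ)
      = (∏ i ∈ Finset.Icc 1 (A'.card + 1), (blockI K a A' i : ℚ))
          * (∑ k ∈ Finset.Icc (a+1) s, (K k : ℚ)) := by
    rw [Finset.prod_Icc_succ_top (by omega)]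
    congr 1
    · exact Finset.prod_congr rfl fun i hi => by
        rw [blockI_insert hlt K (by simpa using (Finset.mem_Icc.mp hi).2)]
    · rw [show A'.card + 1 + 1 = A'.card + 2 from rfl, blockI_insert_top hlt K]
      push_cast
      rfl
  have hedge : ∏ x ∈ insert a A', ((K x : ℚ) + (K (x+1) : ℚ))
      = ((K a : ℚ) + (K (a+1) : ℚ)) * ∏ x ∈ A', ((K x : ℚ) + (K (x+1) : ℚ)) :=
    Finset.prod_insert ha
  have hden : ∏ i ∈ Finset.Icc 1 (A'.card + 1),
        ((∑ k ∈ Finset.Icc 1 ((bnds s (insert a A')).getD i 0), (K k : ℚ)) *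
          ((∑ k ∈ Finset.Icc 1 s, (K k : ℚ))
            - (∑ k ∈ Finset.Icc 1 ((bnds s (insert a A')).getD i 0), (K k : ℚ)) + b))
      = (∏ i ∈ Finset.Icc 1 A'.card,
          ((∑ k ∈ Finset.Icc 1 ((bnds a A').getD i 0), (K k : ℚ)) *
            ((∑ k ∈ Finset.Icc 1 a, (K k : ℚ))
              - (∑ k ∈ Finset.Icc 1 ((bnds a A').getD i 0), (K k : ℚ))
              + ((∑ k ∈ Finset.Icc (a+1) s, (K k : ℚ)) + b))))
        * ((∑ k ∈ Finset.Icc 1 a, (K k : ℚ))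
            * ((∑ k ∈ Finset.Icc (a+1) s, (K k : ℚ)) + b)) := by
    rw [Finset.prod_Icc_succ_top (by omega)]
    congr 1
    · refine Finset.prod_congr rfl fun i hi => ?_
      have hi' : i ≤ A'.card + 1 := by
        have := (Finset.mem_Icc.mp hi).2; omega
      rw [getD_bnds_insert hlt hi']
      congr 1
      rw [← hsplit]
      ring
    · have h1 : (bnds s (insert a A')).getD (A'.card + 1) 0 = a := by
        rw [getD_bnds_insert hlt le_rfl, getD_bnds_last]
      rw [h1]
      congr 1
      rw [← hsplit]
      ring
  rw [hnum, hedge, hden, pow_succ]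
  exact alg_helper _ _ _ _ _ _ _ _

end Aux

lemma krattenthaler_aux (K : ℕ → ℕ) : ∀ s : ℕ, 1 ≤ s → (∀ i, 1 ≤ i → i ≤ s → 0 < K i) →
    ∀ b : ℚ, 0 < b →
    ∑ A ∈ (Finset.Icc 1 (s-1)).powerset, trm K s b A
      = -(b * (∑ k ∈ Finset.Icc 1 s, (K k : ℚ)))
          / ((∑ k ∈ Finset.Icc 1 s, (K k : ℚ)) - (K 1 : ℚ) + b) := by
  intro s
  induction s using Nat.strong_induction_on with
  | _ s IH =>
  intro hs hK b hb
  -- notation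
  set S : ℚ := ∑ k ∈ Finset.Icc 1 s, (K k : ℚ) with hS
  have hPnonneg : ∀ m, (0:ℚ) ≤ ∑ k ∈ Finset.Icc 1 m, (K k : ℚ) := fun m =>
    Finset.sum_nonneg fun k _ => Nat.cast_nonneg _
  have hPmono : ∀ {m n : ℕ}, m ≤ n →
      (∑ k ∈ Finset.Icc 1 m, (K k : ℚ)) ≤ ∑ k ∈ Finset.Icc 1 n, (K k : ℚ) := by
    intro m n hmn
    exact Finset.sum_le_sum_of_subset_of_nonneg
      (Finset.Icc_subset_Icc_right hmn) (fun k _ _ => Nat.cast_nonneg _)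
  have hP1 : (∑ k ∈ Finset.Icc 1 1, (K k : ℚ)) = (K 1 : ℚ) := by simp
  have hK1S : (K 1 : ℚ) ≤ S := by rw [← hP1]; exact hPmono hs
  have hK1pos : (0:ℚ) < (K 1 : ℚ) := by exact_mod_cast hK 1 le_rfl hs
  have hD : (0:ℚ) < S - (K 1 : ℚ) + b := by linarith
  rw [sum_powerset_split s (trm K s b), trm_empty]
  have hinner : ∀ a ∈ Finset.Icc 1 (s-1),
      ∑ A' ∈ (Finset.Icc 1 (a-1)).powerset, trm K s b (insert a A')
        = (∑ k ∈ Finset.Icc (a+1) s, (K k : ℚ)) * ((K a : ℚ) + (K (a+1) : ℚ))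
            / (S - (K 1 : ℚ) + b) := by
    intro a haI
    obtain ⟨ha1, ha2⟩ := Finset.mem_Icc.mp haI
    have has : a ≤ s := le_trans ha2 (Nat.sub_le _ _)
    have halt : a < s := by omega
    set Q : ℚ := ∑ k ∈ Finset.Icc (a+1) s, (K k : ℚ) with hQ
    set Pa : ℚ := ∑ k ∈ Finset.Icc 1 a, (K k : ℚ) with hPa
    have hQnonneg : (0:ℚ) ≤ Q := Finset.sum_nonneg fun k _ => Nat.cast_nonneg _
    have hb' : (0:ℚ) < Q + b := by linarith
    have hPapos : (0:ℚ) < Pa := by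
      have : (K 1 : ℚ) ≤ Pa := by rw [← hP1]; exact hPmono ha1
      linarith
    have hsplit : Pa + Q = S := sum_Icc_split K has
    calc ∑ A' ∈ (Finset.Icc 1 (a-1)).powerset, trm K s b (insert a A')
        = ∑ A' ∈ (Finset.Icc 1 (a-1)).powerset,
            (-(Q * ((K a : ℚ) + (K (a+1) : ℚ)) / (Pa * (Q + b)))) * trm K a (Q + b) A' := by
          refine Finset.sum_congr rfl fun A' hA' => ?_
          exact trm_insert K b ha1 has (Finset.mem_powerset.mp hA')
      _ = (-(Q * ((K a : ℚ) + (K (a+1) : ℚ)) / (Pa * (Q + b))))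
            * ∑ A' ∈ (Finset.Icc 1 (a-1)).powerset, trm K a (Q + b) A' := by
          rw [Finset.mul_sum]
      _ = (-(Q * ((K a : ℚ) + (K (a+1) : ℚ)) / (Pa * (Q + b))))
            * (-((Q + b) * Pa) / (Pa - (K 1 : ℚ) + (Q + b))) := by
          rw [IH a halt ha1 (fun i hi1 hi2 => hK i hi1 (le_trans hi2 has)) (Q + b) hb']
      _ = Q * ((K a : ℚ) + (K (a+1) : ℚ)) / (S - (K 1 : ℚ) + b) := by
          have hden2 : Pa - (K 1 : ℚ) + (Q + b) = S - (K 1 : ℚ) + b := by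
            rw [← hsplit]; ring
          rw [hden2]
          field_simp
  rw [Finset.sum_congr rfl hinner]
  have htel : ∑ a ∈ Finset.Icc 1 (s-1),
      (∑ k ∈ Finset.Icc (a+1) s, (K k : ℚ)) * ((K a : ℚ) + (K (a+1) : ℚ))
        = S * (S - (K 1 : ℚ)) := by
    set g : ℕ → ℚ := fun m =>
      (∑ k ∈ Finset.Icc (m+1) s, (K k : ℚ)) * (∑ k ∈ Finset.Icc (m+2) s, (K k : ℚ)) with hg
    have hterm : ∀ a ∈ Finset.Icc 1 (s-1),
        (∑ k ∈ Finset.Icc (a+1) s, (K k : ℚ)) * ((K a : ℚ) + (K (a+1) : ℚ))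
          = g (a-1) - g a := by
      intro a haI
      obtain ⟨ha1, ha2⟩ := Finset.mem_Icc.mp haI
      have has : a < s := by omega
      have e1 : ∑ k ∈ Finset.Icc (a-1+1) s, (K k : ℚ)
          = (K a : ℚ) + ∑ k ∈ Finset.Icc (a+1) s, (K k : ℚ) := by
        rw [show a - 1 + 1 = a from by omega, Icc_insert_left (by omega),
          Finset.sum_insert (by simp)]
      have e2 : ∑ k ∈ Finset.Icc (a+1) s, (K k : ℚ)
          = (K (a+1) : ℚ) + ∑ k ∈ Finset.Icc (a+1+1) s, (K k : ℚ) := by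
        rw [Icc_insert_left (by omega), Finset.sum_insert (by simp)]
      have e3 : a - 1 + 2 = a + 1 := by omega
      simp only [hg, e3]
      linear_combination (-(∑ k ∈ Finset.Icc (a+1) s, (K k : ℚ))) * e1
        - (∑ k ∈ Finset.Icc (a+1) s, (K k : ℚ)) * e2
    rw [Finset.sum_congr rfl hterm, tel g (s-1)]
    have g0 : g 0 = S * (S - (K 1 : ℚ)) := by
      have h12 : (K 1 : ℚ) + ∑ k ∈ Finset.Icc (1+1) s, (K k : ℚ) = S := by
        rw [hS, Icc_insert_left hs, Finset.sum_insert (by simp)]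
      simp only [hg, Nat.zero_add]
      have h2 : ∑ k ∈ Finset.Icc 2 s, (K k : ℚ) = S - (K 1 : ℚ) := by
        rw [show (2 : ℕ) = 1 + 1 from rfl]
        linarith
      rw [h2, ← hS]
    have gtop : g (s-1) = 0 := by
      have h2 : Finset.Icc (s-1+2) s = ∅ := by
        apply Finset.Icc_eq_empty
        omega
      simp [hg, h2]
    rw [g0, gtop]
    ring
  rw [← Finset.sum_div, htel]
  field_simp
  ring

/-- Krattenthaler's identity, specialized case `X = Y = -b`:
`∑_{A ⊆ [s-1]} (-1)^r I_1 ⋯ I_r ∏_{a∈A}(K_a+K_{a+1}) / ∏_{i=1}^{r-1}(∑_{k≤i}I_k)(∑_{k>i}I_k + b)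
 = -b|K|/(|K| - K_1 + b)`. -/
theorem krattenthaler_specialized (s : ℕ) (hs : 1 ≤ s) (K : ℕ → ℕ)
    (hK : ∀ i, 1 ≤ i → i ≤ s → 0 < K i) (b : ℚ) (hb : 0 < b) :
    ∑ A ∈ (Finset.Icc 1 (s-1)).powerset,
        ((-1 : ℚ))^(A.card + 1) * (∏ i ∈ Finset.Icc 1 (A.card + 1), (blockI K s A i : ℚ)) *
          (∏ a ∈ A, ((K a : ℚ) + (K (a+1) : ℚ))) /
          (∏ i ∈ Finset.Icc 1 A.card,
            ((∑ k ∈ Finset.Icc 1 ((bnds s A).getD i 0), (K k : ℚ)) *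
              ((∑ k ∈ Finset.Icc 1 s, (K k : ℚ))
                - (∑ k ∈ Finset.Icc 1 ((bnds s A).getD i 0), (K k : ℚ)) + b)))
      = -(b * (∑ k ∈ Finset.Icc 1 s, (K k : ℚ)))
          / ((∑ k ∈ Finset.Icc 1 s, (K k : ℚ)) - (K 1 : ℚ) + b) := by
  have := krattenthaler_aux K s hs hK b hb
  simpa [trm] using this
end

section
/- Krattenthaler's identity (case b = 0): Let s > 1 and K_1, ..., K_s positive integers. With the notation for subsets A ⊆ {1,...,s−1} and associated compositions J_1,...,J_r, I = (|J_1|,...,|J_r|) as follows: J_1 = (K_1,...,K_{a_1}), ..., J_r = (K_{a_{r−1}+1},...,K_s), then ∑_{A ⊆ {1,...,s−1}} (−1)^r I_1 ⋯ I_r · (∏_{a∈A}(K_a + K_{a+1})) / (∏_{i=1}^{r−1} (∑_{k=1}^i I_k)(∑_{k=i+1}^r I_k)) = 0. -/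
open Finset

namespace Kratt

lemma sort_insert_max {a : ℕ} {s : Finset ℕ} (h1 : ∀ b ∈ s, b ≤ a) (h2 : a ∉ s) :
    (insert a s).sort (· ≤ ·) = s.sort (· ≤ ·) ++ [a] := by
  apply List.Perm.eq_of_pairwise' (Finset.pairwise_sort _ _) ?_ ?_
  · refine List.pairwise_append.2 ⟨Finset.pairwise_sort _ _, List.pairwise_singleton _ a, ?_⟩
    intro b hb c hc
    simp only [List.mem_singleton] at hc; subst hc
    exact h1 b ((Finset.mem_sort _).1 hb)
  · refine Multiset.coe_eq_coe.1 ?_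
    have : ((s.sort (· ≤ ·) ++ [a] : List ℕ) : Multiset ℕ)
        = (s.sort (· ≤ ·) : Multiset ℕ) + {a} := rfl
    rw [Finset.sort_eq, this, Finset.sort_eq, Finset.insert_val,
      Multiset.ndinsert_of_notMem (by simpa using h2)]
    rw [add_comm]; rfl

lemma sup_mem_of_nonempty {A : Finset ℕ} (h : A.Nonempty) : A.sup id ∈ A := by
  rw [← Finset.sup'_eq_sup h id, ← Finset.max'_eq_sup' A h]
  exact A.max'_mem h

lemma split_max (t : ℕ) (f : Finset ℕ → ℚ) :
    ∑ A ∈ (Finset.Icc 1 t).powerset, f A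
      = f ∅ + ∑ p ∈ Finset.Icc 1 t, ∑ A ∈ (Finset.Icc 1 (p-1)).powerset, f (insert p A) := by
  rw [← Finset.add_sum_erase _ f (Finset.empty_mem_powerset _)]
  congr 1
  rw [Finset.sum_sigma']
  symm
  apply Finset.sum_nbij' (i := fun x => insert x.1 x.2)
      (j := fun A => ⟨A.sup id, A.erase (A.sup id)⟩)
  · rintro ⟨p, A⟩ hx
    simp only [Finset.mem_sigma, Finset.mem_powerset] at hx
    obtain ⟨hp, hA⟩ := hx
    rw [Finset.mem_erase, Finset.mem_powerset]
    constructor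
    · exact (Finset.insert_nonempty _ _).ne_empty
    · exact Finset.insert_subset hp
        (hA.trans (Finset.Icc_subset_Icc_right (by rw [Finset.mem_Icc] at hp; omega)))
  · intro A hA
    rw [Finset.mem_erase, Finset.mem_powerset] at hA
    obtain ⟨hne, hsub⟩ := hA
    have hne' : A.Nonempty := Finset.nonempty_iff_ne_empty.2 hne
    have hmem : A.sup id ∈ A := sup_mem_of_nonempty hne'
    simp only [Finset.mem_sigma, Finset.mem_powerset]
    constructor
    · exact hsub hmem
    · intro a ha
      rw [Finset.mem_erase] at ha
      have h1 := hsub ha.2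
      rw [Finset.mem_Icc] at h1 ⊢
      have : a ≤ A.sup id := Finset.le_sup (f := id) ha.2
      omega
  · rintro ⟨p, A⟩ hx
    simp only [Finset.mem_sigma, Finset.mem_powerset] at hx
    obtain ⟨hp, hA⟩ := hx
    rw [Finset.mem_Icc] at hp
    have hnm : p ∉ A := by
      intro h; have := hA h; rw [Finset.mem_Icc] at this; omega
    have hsup : (insert p A).sup id = p := by
      rw [Finset.sup_insert]
      have : A.sup id ≤ p := Finset.sup_le fun a ha => by
        have := hA ha; rw [Finset.mem_Icc] at this; simp only [id]; omega
      simpa using this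
    simp [hsup, Finset.erase_insert hnm]
  · intro A hA
    rw [Finset.mem_erase, Finset.mem_powerset] at hA
    exact Finset.insert_erase (sup_mem_of_nonempty (Finset.nonempty_iff_ne_empty.2 hA.1))
  · rintro ⟨p, A⟩ _; rfl

variable (K : ℕ → ℕ) (s : ℕ)

/-- prefix sums -/
def pref (p : ℕ) : ℚ := ∑ k ∈ Finset.Icc 1 p, (K k : ℚ)

/-- the summand -/
def term (t : ℕ) (A : Finset ℕ) : ℚ :=
  ((-1 : ℚ))^(A.card + 1) * (∏ i ∈ Finset.Icc 1 (A.card + 1), (blockI K t A i : ℚ)) *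
    (∏ a ∈ A, ((K a : ℚ) + (K (a+1) : ℚ))) /
    (∏ i ∈ Finset.Icc 1 A.card,
      (pref K ((bnds t A).getD i 0) * (pref K s - pref K ((bnds t A).getD i 0))))

lemma pref_zero : pref K 0 = 0 := by simp [pref]

lemma pref_succ (p : ℕ) : pref K (p+1) = pref K p + (K (p+1) : ℚ) := by
  rw [pref, pref, Finset.sum_Icc_succ_top (by omega)]

lemma p_notmem {p : ℕ} {A : Finset ℕ} (hA : A ⊆ Finset.Icc 1 (p-1)) (hp : 1 ≤ p) : p ∉ A := by
  intro h; have := hA h; rw [Finset.mem_Icc] at this; omega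

lemma bnds_length (p : ℕ) (A : Finset ℕ) : (bnds p A).length = A.card + 2 := by
  simp [bnds]

lemma bnds_insert {p t : ℕ} {A : Finset ℕ} (hA : A ⊆ Finset.Icc 1 (p-1)) (hp : 1 ≤ p) :
    bnds t (insert p A) = bnds p A ++ [t] := by
  have h := sort_insert_max (a := p) (s := A)
    (fun b hb => by have := hA hb; rw [Finset.mem_Icc] at this; omega) (p_notmem hA hp)
  simp [bnds, h]

lemma bnds_getD_card {p : ℕ} (A : Finset ℕ) : (bnds p A).getD (A.card + 1) 0 = p := by
  have hl : (A.sort (· ≤ ·)).length = A.card := Finset.length_sort _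
  simp only [bnds, List.getD_cons_succ]
  rw [List.getD_append_right _ _ _ _ (by omega), hl]
  simp

lemma term_insert {p t : ℕ} {A : Finset ℕ} (hA : A ⊆ Finset.Icc 1 (p-1))
    (hp : 1 ≤ p) (hpt : p < t) :
    term K s t (insert p A)
      = -((pref K t - pref K p) * ((K p : ℚ) + (K (p+1) : ℚ)) /
          (pref K p * (pref K s - pref K p))) * term K s p A := by
  have hnm : p ∉ A := p_notmem hA hp
  have hcard : (insert p A).card = A.card + 1 := Finset.card_insert_of_notMem hnm
  have hb : bnds t (insert p A) = bnds p A ++ [t] := bnds_insert hA hp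
  have hlen : (bnds p A).length = A.card + 2 := bnds_length p A
  have hgetD : ∀ i, i ≤ A.card + 1 → (bnds t (insert p A)).getD i 0 = (bnds p A).getD i 0 := by
    intro i hi
    rw [hb, List.getD_append _ _ _ _ (by omega)]
  have hblock : ∀ i, 1 ≤ i → i ≤ A.card + 1 → blockI K t (insert p A) i = blockI K p A i := by
    intro i h1 h2
    rw [blockI, blockI, hgetD i h2, hgetD (i-1) (by omega)]
  have hblocktop : blockI K t (insert p A) (A.card + 2)
      = ∑ k ∈ Finset.Icc (p+1) t, K k := by
    rw [blockI]
    have e1 : (bnds t (insert p A)).getD (A.card + 2 - 1) 0 = p := by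
      rw [show A.card + 2 - 1 = A.card + 1 by omega, hgetD _ le_rfl, bnds_getD_card]
    have e2 : (bnds t (insert p A)).getD (A.card + 2) 0 = t := by
      rw [hb, List.getD_append_right _ _ _ _ (by omega), hlen]
      simp
    rw [e1, e2]
  -- cast of the top block
  have htop : ((∑ k ∈ Finset.Icc (p+1) t, K k : ℕ) : ℚ) = pref K t - pref K p := by
    have : pref K p + ∑ k ∈ Finset.Icc (p+1) t, (K k : ℚ) = pref K t := by
      rw [pref, pref, show Finset.Icc 1 p = Finset.Ioc 0 p by rfl,
        show Finset.Icc (p+1) t = Finset.Ioc p t from Finset.Icc_add_one_left_eq_Ioc p t,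
        show Finset.Icc 1 t = Finset.Ioc 0 t by rfl]
      exact Finset.sum_Ioc_consecutive _ (by omega) (by omega)
    push_cast
    linarith [this]
  -- numerator product
  have hprod : ∏ i ∈ Finset.Icc 1 ((insert p A).card + 1), (blockI K t (insert p A) i : ℚ)
      = (∏ i ∈ Finset.Icc 1 (A.card + 1), (blockI K p A i : ℚ)) * (pref K t - pref K p) := by
    rw [hcard, show A.card + 1 + 1 = A.card + 2 by rfl,
      Finset.prod_Icc_succ_top (by omega), hblocktop, htop]
    congr 1
    refine Finset.prod_congr rfl fun i hi => ?_
    rw [Finset.mem_Icc] at hi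
    rw [hblock i hi.1 hi.2]
  -- denominator product
  have hden : ∏ i ∈ Finset.Icc 1 ((insert p A).card),
      (pref K ((bnds t (insert p A)).getD i 0) *
        (pref K s - pref K ((bnds t (insert p A)).getD i 0)))
      = (∏ i ∈ Finset.Icc 1 A.card,
          (pref K ((bnds p A).getD i 0) * (pref K s - pref K ((bnds p A).getD i 0)))) *
        (pref K p * (pref K s - pref K p)) := by
    rw [hcard, Finset.prod_Icc_succ_top (by omega)]
    congr 1
    · refine Finset.prod_congr rfl fun i hi => ?_
      rw [Finset.mem_Icc] at hi
      rw [hgetD i (by omega)]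
    · rw [hgetD _ le_rfl, bnds_getD_card]
  have hK : ∏ a ∈ insert p A, ((K a : ℚ) + (K (a+1) : ℚ))
      = ((K p : ℚ) + (K (p+1) : ℚ)) * ∏ a ∈ A, ((K a : ℚ) + (K (a+1) : ℚ)) :=
    Finset.prod_insert hnm
  rw [term, term, hprod, hden, hK, hcard]
  rw [pow_succ]
  generalize pref K s - pref K p = S
  ring

lemma tele (n : ℕ) :
    ∑ p ∈ Finset.Icc 1 n, (pref K (p+1) - pref K (p-1))
      = pref K (n+1) + pref K n - pref K 1 - pref K 0 := by
  induction n with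
  | zero => simp
  | succ n ih =>
    rw [Finset.sum_Icc_succ_top (by omega), ih]
    have : (n + 1 : ℕ) - 1 = n := by omega
    rw [this]
    ring

lemma aux_poly (n : ℕ) :
    ∑ p ∈ Finset.Icc 1 n, (pref K (n+1) - pref K p) * (pref K (p+1) - pref K (p-1))
      = pref K (n+1) * (pref K (n+1) - pref K 1) := by
  induction n with
  | zero => simp
  | succ n ih =>
    rw [Finset.sum_Icc_succ_top (by omega)]
    have split : ∑ p ∈ Finset.Icc 1 n,
        (pref K (n+2) - pref K p) * (pref K (p+1) - pref K (p-1))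
        = (∑ p ∈ Finset.Icc 1 n, (pref K (n+1) - pref K p) * (pref K (p+1) - pref K (p-1)))
          + (pref K (n+2) - pref K (n+1)) * ∑ p ∈ Finset.Icc 1 n, (pref K (p+1) - pref K (p-1)) := by
      rw [Finset.mul_sum, ← Finset.sum_add_distrib]
      refine Finset.sum_congr rfl fun p _ => by ring
    rw [show n + 1 + 1 = n + 2 by rfl, split, ih, tele, pref_zero]
    have : (n + 1 : ℕ) - 1 = n := by omega
    rw [this]
    ring

lemma poly_id (t : ℕ) (ht : 1 ≤ t) :
    ∑ p ∈ Finset.Icc 1 (t-1), (pref K t - pref K p) * (pref K (p+1) - pref K (p-1))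
      = pref K t * (pref K t - pref K 1) := by
  obtain ⟨n, rfl⟩ : ∃ n, t = n + 1 := ⟨t - 1, by omega⟩
  simpa using aux_poly K n

lemma main (hs : 1 < s) (hK : ∀ i, 1 ≤ i → i ≤ s → 0 < K i) :
    ∀ t, 1 ≤ t → t ≤ s →
      ∑ A ∈ (Finset.Icc 1 (t-1)).powerset, term K s t A
        = - pref K t * (pref K s - pref K t) / (pref K s - pref K 1) := by
  have hmono : ∀ p q : ℕ, p < q → q ≤ s → pref K p < pref K q := by
    intro p q hpq hq
    refine Finset.sum_lt_sum_of_subset (Finset.Icc_subset_Icc_right (by omega))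
      (i := q) (by rw [Finset.mem_Icc]; omega) (by rw [Finset.mem_Icc]; omega)
      (by exact_mod_cast hK q (by omega) hq) (fun j _ _ => by positivity)
  have hpos : ∀ p : ℕ, 1 ≤ p → p ≤ s → 0 < pref K p := by
    intro p h1 h2
    have := hmono 0 p (by omega) h2
    rwa [pref_zero] at this
  have hs1 : pref K s - pref K 1 ≠ 0 := by
    have := hmono 1 s hs le_rfl; linarith
  intro t
  induction t using Nat.strong_induction_on with
  | _ t ih =>
    intro ht1 hts
    rw [split_max (t-1) (term K s t)]
    have hemp : term K s t ∅ = - pref K t := by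
      simp only [term, Finset.card_empty, pow_one, Finset.prod_empty, Finset.Icc_self]
      rw [Finset.Icc_eq_empty (by omega : ¬ (1:ℕ) ≤ 0), Finset.prod_empty, Finset.prod_singleton]
      have : blockI K t ∅ 1 = ∑ k ∈ Finset.Icc 1 t, K k := by
        simp [blockI, bnds]
      rw [this, pref]
      push_cast
      ring
    have hinner : ∀ p ∈ Finset.Icc 1 (t-1),
        ∑ A ∈ (Finset.Icc 1 (p-1)).powerset, term K s t (insert p A)
          = (pref K t - pref K p) * (pref K (p+1) - pref K (p-1)) / (pref K s - pref K 1) := by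
      intro p hp
      rw [Finset.mem_Icc] at hp
      have hterm : ∀ A ∈ (Finset.Icc 1 (p-1)).powerset,
          term K s t (insert p A)
            = -((pref K t - pref K p) * ((K p : ℚ) + (K (p+1) : ℚ)) /
                (pref K p * (pref K s - pref K p))) * term K s p A := fun A hA =>
        term_insert K s (Finset.mem_powerset.1 hA) hp.1 (by omega)
      rw [Finset.sum_congr rfl hterm, ← Finset.mul_sum,
        ih p (by omega) hp.1 (by omega)]
      have hpp : pref K p ≠ 0 := ne_of_gt (hpos p hp.1 (by omega))
      have hsp : pref K s - pref K p ≠ 0 := by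
        have := hmono p s (by omega) le_rfl; linarith
      have hkk : (K p : ℚ) + (K (p+1) : ℚ) = pref K (p+1) - pref K (p-1) := by
        have e1 : pref K (p+1) = pref K p + (K (p+1) : ℚ) := pref_succ K p
        have e2 : pref K p = pref K (p-1) + (K p : ℚ) := by
          conv_lhs => rw [show p = (p-1)+1 by omega]
          rw [pref_succ, show (p-1)+1 = p by omega]
        rw [e1, e2]; ring
      rw [hkk]
      field_simp
    rw [Finset.sum_congr rfl hinner, ← Finset.sum_div, poly_id K t ht1, hemp]
    field_simp
    ring

end Kratt

/-- Krattenthaler's identity, case `b = 0`: for `s > 1`,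
`∑_{A ⊆ [s-1]} (-1)^r I_1 ⋯ I_r ∏_{a∈A}(K_a+K_{a+1}) / ∏_{i=1}^{r-1}(∑_{k≤i}I_k)(∑_{k>i}I_k) = 0`. -/
theorem krattenthaler_b_zero (s : ℕ) (hs : 1 < s) (K : ℕ → ℕ)
    (hK : ∀ i, 1 ≤ i → i ≤ s → 0 < K i) :
    ∑ A ∈ (Finset.Icc 1 (s-1)).powerset,
        ((-1 : ℚ))^(A.card + 1) * (∏ i ∈ Finset.Icc 1 (A.card + 1), (blockI K s A i : ℚ)) *
          (∏ a ∈ A, ((K a : ℚ) + (K (a+1) : ℚ))) /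
          (∏ i ∈ Finset.Icc 1 A.card,
            ((∑ k ∈ Finset.Icc 1 ((bnds s A).getD i 0), (K k : ℚ)) *
              ((∑ k ∈ Finset.Icc 1 s, (K k : ℚ))
                - (∑ k ∈ Finset.Icc 1 ((bnds s A).getD i 0), (K k : ℚ)))))
      = 0 := by
  have h := Kratt.main K s hs hK s (by omega) le_rfl
  simp only [sub_self, mul_zero, neg_zero, zero_div] at h
  rw [← h]
  rfl
end

section
/- Vanishing of composition coefficients: Let s > 1 and K = (K_1, ..., K_s) be a composition of N into positive integers. For each subset A ⊆ {1,...,s−1} with |A| = r−1, split K at the positions of A into blocks J_1, ..., J_r and set I = (|J_1|,...,|J_r|). Then ∑_{A ⊆ {1,...,s−1}} n_I · m_{J_1} ⋯ m_{J_r} = 0, where n and m are the Juhl constants. -/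
open Finset

/-- The Juhl constant `n_I` for a composition `I = (I_1, ..., I_r)`, as a rational number. -/
noncomputable def nJuhl (I : List ℕ) : ℚ :=
  ((Nat.factorial (I.sum - 1) : ℚ))^2 *
    (∏ j ∈ Finset.range I.length, (1 : ℚ) / ((Nat.factorial (I.getD j 0 - 1) : ℚ))^2) *
    (∏ j ∈ Finset.range (I.length - 1),
      (1 : ℚ) / ((((I.take (j+1)).sum : ℚ)) * (((I.drop (j+1)).sum : ℚ))))

/-- The Juhl constant `m_I` for a composition `I = (I_1, ..., I_r)`, as a rational number. -/
noncomputable def mJuhl (I : List ℕ) : ℚ :=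
  (-1 : ℚ)^(I.length + 1) * (Nat.factorial I.sum : ℚ) * (Nat.factorial (I.sum - 1) : ℚ) *
    (∏ j ∈ Finset.range I.length,
      (1 : ℚ) / ((Nat.factorial (I.getD j 0) : ℚ) * (Nat.factorial (I.getD j 0 - 1) : ℚ))) *
    (∏ j ∈ Finset.range (I.length - 1),
      (1 : ℚ) / (((I.getD j 0 : ℚ)) + ((I.getD (j+1) 0 : ℚ))))

/-- The `i`-th block `J_i` (for `1 ≤ i ≤ |A| + 1`) of the list `K` split at the positions
of `A`. -/
def Jblock (K : List ℕ) (A : Finset ℕ) (i : ℕ) : List ℕ :=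
  (K.take ((bnds K.length A).getD i 0)).drop ((bnds K.length A).getD (i-1) 0)

/-- The composition `I = (|J_1|, ..., |J_r|)` of block sums. -/
def Ilist (K : List ℕ) (A : Finset ℕ) : List ℕ :=
  (List.range (A.card + 1)).map (fun i => (Jblock K A (i+1)).sum)


namespace JuhlAux

/-- Partial sum of the first `i` entries. -/
def Sn (K : List ℕ) (i : ℕ) : ℕ := (K.take i).sum

/-- Partial sum, as a rational. -/
noncomputable def Sq (K : List ℕ) (i : ℕ) : ℚ := (Sn K i : ℚ)

/-- Sum of the block from position `a` to position `b`. -/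
def Pn (K : List ℕ) (a b : ℕ) : ℕ := ((K.take b).drop a).sum

lemma Sn_zero (K : List ℕ) : Sn K 0 = 0 := rfl

lemma Sq_zero (K : List ℕ) : Sq K 0 = 0 := by simp [Sq, Sn]

lemma Sn_succ {K : List ℕ} {i : ℕ} (h : i < K.length) :
    Sn K (i + 1) = Sn K i + K.getD i 0 := by
  unfold Sn
  rw [List.sum_take_succ K i h, List.getD_eq_getElem K 0 h]

lemma getD_pos {K : List ℕ} (hK : ∀ x ∈ K, 0 < x) {i : ℕ} (h : i < K.length) :
    0 < K.getD i 0 := by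
  rw [List.getD_eq_getElem K 0 h]
  exact hK _ (List.getElem_mem h)

lemma Sn_lt {K : List ℕ} (hK : ∀ x ∈ K, 0 < x) :
    ∀ {a b : ℕ}, a < b → b ≤ K.length → Sn K a < Sn K b := by
  intro a b
  induction b with
  | zero => omega
  | succ b ih =>
    intro hab hb
    have hbl : b < K.length := by omega
    have h2 : Sn K b < Sn K (b + 1) := by
      rw [Sn_succ hbl]
      have := getD_pos hK hbl
      omega
    rcases Nat.lt_or_ge a b with h | h
    · exact lt_trans (ih h (le_of_lt hbl)) h2
    · have : a = b := by omega
      subst this; exact h2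

lemma Sq_lt {K : List ℕ} (hK : ∀ x ∈ K, 0 < x) {a b : ℕ} (h : a < b) (hb : b ≤ K.length) :
    Sq K a < Sq K b := by
  unfold Sq; exact_mod_cast Sn_lt hK h hb

lemma Sn_add_Pn {K : List ℕ} {a b : ℕ} (h : a ≤ b) : Sn K a + Pn K a b = Sn K b := by
  unfold Sn Pn
  have h1 : (K.take b).take a = K.take a := by
    rw [List.take_take]; congr 1; omega
  conv_rhs => rw [← List.take_append_drop a (K.take b)]
  rw [List.sum_append, h1]

lemma Pn_cast {K : List ℕ} {a b : ℕ} (h : a ≤ b) : (Pn K a b : ℚ) = Sq K b - Sq K a := by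
  have := Sn_add_Pn (K := K) h
  unfold Sq
  push_cast [← this]
  ring

lemma Pn_add {K : List ℕ} {a b c : ℕ} (hab : a ≤ b) (hbc : b ≤ c) :
    Pn K a b + Pn K b c = Pn K a c := by
  have h1 := Sn_add_Pn (K := K) hab
  have h2 := Sn_add_Pn (K := K) hbc
  have h3 := Sn_add_Pn (K := K) (le_trans hab hbc)
  omega

lemma Pn_pos {K : List ℕ} (hK : ∀ x ∈ K, 0 < x) {a b : ℕ} (hab : a < b) (hb : b ≤ K.length) :
    0 < Pn K a b := by
  have h1 := Sn_add_Pn (K := K) (le_of_lt hab)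
  have h2 := Sn_lt hK hab hb
  omega


/-- gap factor -/
noncomputable def vq (K : List ℕ) (i : ℕ) : ℚ := 1 / (Sq K (i+1) - Sq K (i-1))
/-- boundary factor -/
noncomputable def uq (K : List ℕ) (a : ℕ) : ℚ :=
  1 / (Sq K a * (Sq K K.length - Sq K a))
/-- product of gap factors strictly between `a` and `b` -/
noncomputable def gapP (K : List ℕ) (a b : ℕ) : ℚ := ∏ i ∈ Finset.Ico (a+1) b, vq K i

noncomputable def glist (K : List ℕ) : ℕ → List ℕ → ℚ
  | j, [] => (Sq K K.length - Sq K j) * gapP K j K.length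
  | j, c :: l => -((Sq K c - Sq K j) * gapP K j c * uq K c * glist K c l)

def chainMapF {α : Type*} (F : ℕ → ℕ → α) (e : ℕ) : ℕ → List ℕ → List α
  | j, [] => [F j e]
  | j, c :: l => F j c :: chainMapF F e c l

noncomputable def fcq (K : List ℕ) (j : ℕ) : ℚ :=
  ∏ t ∈ Finset.Ico j K.length,
    (1:ℚ)/((Nat.factorial (K.getD t 0) : ℚ) * (Nat.factorial (K.getD t 0 - 1) : ℚ))

lemma chainMapF_length {α : Type*} (F : ℕ → ℕ → α) (e : ℕ) :
    ∀ (l : List ℕ) (j : ℕ), (chainMapF F e j l).length = l.length + 1 := by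
  intro l
  induction l with
  | nil => intro j; rfl
  | cons c l ih => intro j; simp [chainMapF, ih]

lemma map_chainMapF {α β : Type*} (F : ℕ → ℕ → α) (g : α → β) (e : ℕ) :
    ∀ (l : List ℕ) (j : ℕ),
      (chainMapF F e j l).map g = chainMapF (fun a b => g (F a b)) e j l := by
  intro l
  induction l with
  | nil => intro j; rfl
  | cons c l ih => intro j; simp [chainMapF, ih]

lemma prod_range_getD {α : Type*} (d : α) (f : α → ℚ) :
    ∀ (L : List α), ∏ i ∈ Finset.range L.length, f (L.getD i d) = (L.map f).prod := by
  intro L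
  induction L with
  | nil => simp
  | cons a L ih =>
    rw [List.length_cons, Finset.prod_range_succ']
    simp only [List.getD_cons_succ, List.getD_cons_zero, ih]
    simp [mul_comm]

lemma map_range_chain {α : Type*} (F : ℕ → ℕ → α) (e : ℕ) :
    ∀ (l : List ℕ) (j : ℕ),
      (List.range (l.length + 1)).map
        (fun i => F ((j :: l ++ [e]).getD i 0) ((j :: l ++ [e]).getD (i+1) 0))
      = chainMapF F e j l := by
  intro l
  induction l with
  | nil => intro j; rfl
  | cons c l ih =>
    intro j
    rw [List.length_cons, List.range_succ_eq_map]
    simp only [List.map_cons, List.map_map]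
    congr 1
    rw [← ih c]
    apply List.map_congr_left
    intro i _
    simp [Function.comp, List.getD_cons_succ]

lemma prod_range_chain (F : ℕ → ℕ → ℚ) (e : ℕ) :
    ∀ (l : List ℕ) (j : ℕ),
      ∏ i ∈ Finset.range (l.length + 1),
        F ((j :: l ++ [e]).getD i 0) ((j :: l ++ [e]).getD (i+1) 0)
      = (chainMapF F e j l).prod := by
  intro l
  induction l with
  | nil =>
    intro j
    simp [chainMapF]
  | cons c l ih =>
    intro j
    rw [List.length_cons, Finset.prod_range_succ']
    have h1 : ∀ k ∈ Finset.range (l.length + 1),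
        F ((j :: c :: l ++ [e]).getD (k+1) 0) ((j :: c :: l ++ [e]).getD (k+1+1) 0)
        = F ((c :: l ++ [e]).getD k 0) ((c :: l ++ [e]).getD (k+1) 0) := fun k _ => rfl
    rw [Finset.prod_congr rfl h1, ih c]
    simp [chainMapF, mul_comm]

lemma getD_mem {l : List ℕ} {t : ℕ} (h : t < l.length) : l.getD t 0 ∈ l := by
  rw [List.getD_eq_getElem l 0 h]
  exact List.getElem_mem h

lemma chain_lt_mem {l : List ℕ} {j : ℕ} (h : List.Chain (· < ·) j l) :
    ∀ x ∈ l, j < x := by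
  have h' := List.isChain_iff_pairwise.1 h
  exact (List.pairwise_cons.1 h').1

lemma chain_of_sorted : ∀ {l : List ℕ} {j : ℕ}, l.Pairwise (· < ·) → (∀ x ∈ l, j < x) →
    List.Chain (· < ·) j l := by
  intro l
  induction l with
  | nil => intro j _ _; exact List.Chain.nil
  | cons c l ih =>
    intro j hs hj
    rw [List.pairwise_cons] at hs
    exact List.Chain.cons (hj c (by simp)) (ih hs.2 (fun x hx => hs.1 x hx))

lemma chainMapF_Pn_sum {K : List ℕ} :
    ∀ (l : List ℕ) (j : ℕ), List.Chain (· < ·) j l → (∀ x ∈ l, x ≤ K.length) →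
      (chainMapF (Pn K) K.length j l).sum = Pn K j K.length := by
  intro l
  induction l with
  | nil => intro j _ _; simp [chainMapF]
  | cons c l ih =>
    intro j hch hle
    replace hch := List.isChain_cons_cons.1 hch
    have hc : c ≤ K.length := hle c (by simp)
    have : (chainMapF (Pn K) K.length c l).sum = Pn K c K.length :=
      ih c hch.2 (fun x hx => hle x (by simp [hx]))
    simp only [chainMapF, List.sum_cons, this]
    exact Pn_add (le_of_lt hch.1) hc

lemma chainMapF_take_sum {K : List ℕ} :
    ∀ (l : List ℕ) (j : ℕ), List.Chain (· < ·) j l →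
      ∀ t, t < l.length →
      ((chainMapF (Pn K) K.length j l).take (t+1)).sum = Pn K j (l.getD t 0) := by
  intro l
  induction l with
  | nil => intro _ _ t ht; simp at ht
  | cons c l ih =>
    intro j hch t ht
    replace hch := List.isChain_cons_cons.1 hch
    cases t with
    | zero => simp [chainMapF]
    | succ t =>
      have ht' : t < l.length := by simpa using ht
      have hrec := ih c hch.2 t ht'
      simp only [chainMapF, List.take_succ_cons, List.sum_cons, hrec, List.getD_cons_succ]
      have hcd : c ≤ l.getD t 0 :=
        le_of_lt (chain_lt_mem hch.2 _ (getD_mem ht'))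
      exact Pn_add (le_of_lt hch.1) hcd


lemma fact_cancel {P : ℕ} (hP : 0 < P) :
    (1:ℚ)/((Nat.factorial (P-1) : ℚ))^2 * ((Nat.factorial P : ℚ) * (Nat.factorial (P-1) : ℚ))
      = (P : ℚ) := by
  obtain ⟨Q, rfl⟩ : ∃ Q, P = Q + 1 := ⟨P - 1, by omega⟩
  have h1 : (Nat.factorial Q : ℚ) ≠ 0 := by
    exact_mod_cast Nat.factorial_ne_zero Q
  simp only [Nat.add_sub_cancel, Nat.factorial_succ]
  push_cast
  field_simp

lemma Sq_pair {K : List ℕ} {m : ℕ} (h : m + 2 ≤ K.length) :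
    Sq K (m+2) - Sq K m = (K.getD m 0 : ℚ) + (K.getD (m+1) 0 : ℚ) := by
  have h1 : Sn K (m+1) = Sn K m + K.getD m 0 := Sn_succ (by omega)
  have h2 : Sn K (m+2) = Sn K (m+1) + K.getD (m+1) 0 := Sn_succ (by omega)
  unfold Sq
  push_cast [h2, h1]
  ring

lemma mJuhl_block {K : List ℕ} {j c : ℕ} (hjc : j < c) (hcs : c ≤ K.length) :
    mJuhl ((K.take c).drop j)
      = (-1:ℚ)^(c - j + 1) * (Nat.factorial (Pn K j c) : ℚ)
          * (Nat.factorial (Pn K j c - 1) : ℚ)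
          * (∏ t ∈ Finset.Ico j c,
              (1:ℚ)/((Nat.factorial (K.getD t 0) : ℚ) * (Nat.factorial (K.getD t 0 - 1) : ℚ)))
          * gapP K j c := by
  set L := (K.take c).drop j with hL
  have hlen : L.length = c - j := by
    rw [hL, List.length_drop, List.length_take]
    omega
  have hgetD : ∀ t, t < c - j → L.getD t 0 = K.getD (j + t) 0 := by
    intro t ht
    have h1 : t < L.length := by omega
    have h2 : j + t < K.length := by omega
    rw [List.getD_eq_getElem L 0 h1, List.getD_eq_getElem K 0 h2]
    simp only [hL, List.getElem_drop, List.getElem_take]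
  have hsum : L.sum = Pn K j c := rfl
  unfold mJuhl
  rw [hsum, hlen]
  congr 1
  · congr 1
    rw [Finset.prod_Ico_eq_prod_range]
    apply Finset.prod_congr rfl
    intro t ht
    rw [Finset.mem_range] at ht
    rw [hgetD t ht]
  · -- adjacency product
    rw [gapP, show Finset.Ico (j+1) c = Finset.Ico (j+1) ((c - j - 1) + (j+1)) from by
        congr 1; omega]
    rw [Finset.prod_Ico_eq_prod_range]
    rw [show (c - j - 1 + (j + 1)) - (j+1) = c - j - 1 from by omega]
    apply Finset.prod_congr rfl
    intro t ht
    rw [Finset.mem_range] at ht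
    rw [hgetD t (by omega), hgetD (t+1) (by omega)]
    rw [vq]
    have : (j + 1 + t) + 1 = (j + t) + 2 := by omega
    rw [this, show (j + 1 + t) - 1 = j + t from by omega]
    rw [Sq_pair (by omega)]
    rw [show j + (t+1) = j + t + 1 from by omega]

end JuhlAux

namespace JuhlAux

lemma key_chain {K : List ℕ} (hK : ∀ x ∈ K, 0 < x) :
    ∀ (l : List ℕ) (j : ℕ), List.Chain (· < ·) j l → j < K.length →
      (∀ x ∈ l, x < K.length) →
      (chainMapF (fun a b => (1:ℚ)/((Nat.factorial (Pn K a b - 1) : ℚ))^2) K.length j l).prod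
        * (chainMapF (fun a b => mJuhl ((K.take b).drop a)) K.length j l).prod
        * (l.map (uq K)).prod
      = (-1:ℚ)^(K.length - j + 1) * fcq K j * glist K j l := by
  intro l
  induction l with
  | nil =>
    intro j _ hj _
    simp only [chainMapF, List.prod_cons, List.prod_nil, List.map_nil, mul_one]
    rw [mJuhl_block hj (le_refl K.length)]
    have hc := fact_cancel (Pn_pos hK hj (le_refl K.length))
    have hPc : (Pn K j K.length : ℚ) = Sq K K.length - Sq K j := Pn_cast (le_of_lt hj)
    rw [show glist K j [] = (Sq K K.length - Sq K j) * gapP K j K.length from rfl]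
    rw [show fcq K j = ∏ t ∈ Finset.Ico j K.length,
        (1:ℚ)/((Nat.factorial (K.getD t 0) : ℚ) * (Nat.factorial (K.getD t 0 - 1) : ℚ))
        from rfl]
    rw [← hPc]
    linear_combination ((-1:ℚ)^(K.length - j + 1) *
      (∏ t ∈ Finset.Ico j K.length,
        (1:ℚ)/((Nat.factorial (K.getD t 0) : ℚ) * (Nat.factorial (K.getD t 0 - 1) : ℚ))) *
      gapP K j K.length) * hc
  | cons c l ih =>
    intro j hch hj hlt
    replace hch := List.isChain_cons_cons.1 hch
    obtain ⟨hjc, hch'⟩ := hch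
    have hcs : c < K.length := hlt c (by simp)
    have hIH := ih c hch' hcs (fun x hx => hlt x (by simp [hx]))
    simp only [chainMapF, List.prod_cons, List.map_cons]
    rw [mJuhl_block hjc (le_of_lt hcs)]
    have hc := fact_cancel (Pn_pos hK hjc (le_of_lt hcs))
    have hPc : (Pn K j c : ℚ) = Sq K c - Sq K j := Pn_cast (le_of_lt hjc)
    have hfc : (∏ t ∈ Finset.Ico j c,
        (1:ℚ)/((Nat.factorial (K.getD t 0) : ℚ) * (Nat.factorial (K.getD t 0 - 1) : ℚ)))
        * fcq K c = fcq K j := by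
      rw [show fcq K c = ∏ t ∈ Finset.Ico c K.length,
          (1:ℚ)/((Nat.factorial (K.getD t 0) : ℚ) * (Nat.factorial (K.getD t 0 - 1) : ℚ))
          from rfl,
        show fcq K j = ∏ t ∈ Finset.Ico j K.length,
          (1:ℚ)/((Nat.factorial (K.getD t 0) : ℚ) * (Nat.factorial (K.getD t 0 - 1) : ℚ))
          from rfl]
      exact Finset.prod_Ico_consecutive _ (le_of_lt hjc) (le_of_lt hcs)
    have hsgn : (-1:ℚ)^(c - j + 1) * (-1:ℚ)^(K.length - c + 1)
        = -(-1:ℚ)^(K.length - j + 1) := by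
      rw [← pow_add, show (c - j + 1) + (K.length - c + 1) = (K.length - j + 1) + 1 from by
        omega, pow_succ]
      ring
    rw [show glist K j (c :: l)
        = -((Sq K c - Sq K j) * gapP K j c * uq K c * glist K c l) from rfl]
    calc ((1:ℚ)/((Nat.factorial (Pn K j c - 1) : ℚ))^2
            * (chainMapF (fun a b => (1:ℚ)/((Nat.factorial (Pn K a b - 1) : ℚ))^2)
                K.length c l).prod)
          * ((-1:ℚ)^(c - j + 1) * (Nat.factorial (Pn K j c) : ℚ)
              * (Nat.factorial (Pn K j c - 1) : ℚ)
              * (∏ t ∈ Finset.Ico j c,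
                  (1:ℚ)/((Nat.factorial (K.getD t 0) : ℚ)
                    * (Nat.factorial (K.getD t 0 - 1) : ℚ)))
              * gapP K j c
            * (chainMapF (fun a b => mJuhl ((K.take b).drop a)) K.length c l).prod)
          * (uq K c * (l.map (uq K)).prod)
        = ((-1:ℚ)^(c - j + 1)
            * ((1:ℚ)/((Nat.factorial (Pn K j c - 1) : ℚ))^2
              * ((Nat.factorial (Pn K j c) : ℚ) * (Nat.factorial (Pn K j c - 1) : ℚ)))
            * (∏ t ∈ Finset.Ico j c,
                (1:ℚ)/((Nat.factorial (K.getD t 0) : ℚ)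
                  * (Nat.factorial (K.getD t 0 - 1) : ℚ)))
            * gapP K j c * uq K c)
          * ((chainMapF (fun a b => (1:ℚ)/((Nat.factorial (Pn K a b - 1) : ℚ))^2)
                K.length c l).prod
            * (chainMapF (fun a b => mJuhl ((K.take b).drop a)) K.length c l).prod
            * (l.map (uq K)).prod) := by ring
      _ = ((-1:ℚ)^(c - j + 1)
            * ((1:ℚ)/((Nat.factorial (Pn K j c - 1) : ℚ))^2
              * ((Nat.factorial (Pn K j c) : ℚ) * (Nat.factorial (Pn K j c - 1) : ℚ)))
            * (∏ t ∈ Finset.Ico j c,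
                (1:ℚ)/((Nat.factorial (K.getD t 0) : ℚ)
                  * (Nat.factorial (K.getD t 0 - 1) : ℚ)))
            * gapP K j c * uq K c)
          * ((-1:ℚ)^(K.length - c + 1) * fcq K c * glist K c l) := by rw [hIH]
      _ = ((-1:ℚ)^(c - j + 1) * (-1:ℚ)^(K.length - c + 1))
            * ((1:ℚ)/((Nat.factorial (Pn K j c - 1) : ℚ))^2
              * ((Nat.factorial (Pn K j c) : ℚ) * (Nat.factorial (Pn K j c - 1) : ℚ)))
            * ((∏ t ∈ Finset.Ico j c,
                (1:ℚ)/((Nat.factorial (K.getD t 0) : ℚ)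
                  * (Nat.factorial (K.getD t 0 - 1) : ℚ))) * fcq K c)
            * (gapP K j c * uq K c * glist K c l) := by ring
      _ = (-(-1:ℚ)^(K.length - j + 1)) * (Pn K j c : ℚ) * fcq K j
            * (gapP K j c * uq K c * glist K c l) := by rw [hsgn, hc, hfc]
      _ = (-1:ℚ)^(K.length - j + 1) * fcq K j
            * (-((Sq K c - Sq K j) * gapP K j c * uq K c * glist K c l)) := by
          rw [hPc]; ring

end JuhlAux

namespace JuhlAux

lemma Sq_sub_ne {K : List ℕ} (hK : ∀ x ∈ K, 0 < x) {a b : ℕ} (hab : a < b)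
    (hb : b ≤ K.length) : Sq K b - Sq K a ≠ 0 :=
  sub_ne_zero.2 (ne_of_gt (Sq_lt hK hab hb))

lemma Sq_ne {K : List ℕ} (hK : ∀ x ∈ K, 0 < x) {a : ℕ} (ha : 0 < a) (hb : a ≤ K.length) :
    Sq K a ≠ 0 := by
  have := Sq_lt hK ha hb
  rw [Sq_zero] at this
  exact ne_of_gt this

lemma gapP_split {K : List ℕ} {j t : ℕ} (hjt : j < t) (hts : t < K.length) :
    gapP K j K.length = gapP K j t * (vq K t * gapP K t K.length) := by
  rw [gapP, gapP, gapP,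
    ← Finset.prod_Ico_consecutive (vq K) (show j + 1 ≤ t by omega)
      (show t ≤ K.length by omega),
    Finset.prod_eq_prod_Ico_succ_bot hts (vq K)]

lemma claimB_base {K : List ℕ} (hK : ∀ x ∈ K, 0 < x) (hs : 1 < K.length) {j : ℕ}
    (hj : j < K.length) :
    ∑ A ∈ (Finset.Icc K.length (K.length - 1)).powerset, glist K j (A.sort (· ≤ ·))
    = gapP K j K.length *
        ((Sq K K.length - Sq K j) * Sq K j
          + (Sq K (K.length - 1) - Sq K j) * (Sq K K.length - Sq K j))
        / Sq K (K.length - 1) := by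
  have hempty : Finset.Icc K.length (K.length - 1) = ∅ := Finset.Icc_eq_empty (by omega)
  rw [hempty, Finset.powerset_empty, Finset.sum_singleton, Finset.sort_empty]
  rw [show glist K j [] = (Sq K K.length - Sq K j) * gapP K j K.length from rfl]
  have hD : Sq K (K.length - 1) ≠ 0 := Sq_ne hK (by omega) (by omega)
  field_simp
  ring

lemma claimB {K : List ℕ} (hK : ∀ x ∈ K, 0 < x) (hs : 1 < K.length) :
    ∀ (n t j : ℕ), K.length - t ≤ n → j < t → t ≤ K.length →
      ∑ A ∈ (Finset.Icc t (K.length - 1)).powerset, glist K j (A.sort (· ≤ ·))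
      = gapP K j K.length *
          ((Sq K K.length - Sq K j) * Sq K j
            + (Sq K (t - 1) - Sq K j) * (Sq K t - Sq K j))
          / Sq K (K.length - 1) := by
  intro n
  induction n with
  | zero =>
    intro t j h1 hjt hts
    have ht : t = K.length := by omega
    subst ht
    exact claimB_base hK hs (by omega)
  | succ n ih =>
    intro t j h1 hjt hts
    by_cases ht : t = K.length
    · subst ht
      exact claimB_base hK hs (by omega)
    have hts' : t < K.length := lt_of_le_of_ne hts ht
    have hIcc : Finset.Icc t (K.length - 1) = insert t (Finset.Icc (t+1) (K.length - 1)) := by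
      ext x
      simp only [Finset.mem_Icc, Finset.mem_insert]
      omega
    have htn : t ∉ Finset.Icc (t+1) (K.length - 1) := by
      simp only [Finset.mem_Icc]
      omega
    rw [hIcc, Finset.sum_powerset_insert htn]
    have hsum2 : ∑ A ∈ (Finset.Icc (t+1) (K.length-1)).powerset,
          glist K j ((insert t A).sort (· ≤ ·))
        = -((Sq K t - Sq K j) * gapP K j t * uq K t) *
          ∑ A ∈ (Finset.Icc (t+1) (K.length-1)).powerset, glist K t (A.sort (· ≤ ·)) := by
      rw [Finset.mul_sum]
      apply Finset.sum_congr rfl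
      intro A hA
      rw [Finset.mem_powerset] at hA
      have hmem : ∀ b ∈ A, t ≤ b := by
        intro b hb
        have := hA hb
        rw [Finset.mem_Icc] at this
        omega
      have htA : t ∉ A := by
        intro hx
        have := hA hx
        rw [Finset.mem_Icc] at this
        omega
      rw [Finset.sort_insert _ hmem htA]
      rw [show glist K j (t :: A.sort (· ≤ ·))
          = -((Sq K t - Sq K j) * gapP K j t * uq K t * glist K t (A.sort (· ≤ ·))) from rfl]
      ring
    rw [hsum2]
    rw [ih (t+1) j (by omega) (by omega) (by omega), ih (t+1) t (by omega) (by omega) (by omega)]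
    simp only [Nat.add_sub_cancel]
    have hD : Sq K (K.length - 1) ≠ 0 := Sq_ne hK (by omega) (by omega)
    have hT : Sq K t ≠ 0 := Sq_ne hK (by omega) (by omega)
    have hMT : Sq K K.length - Sq K t ≠ 0 := Sq_sub_ne hK hts' (le_refl _)
    have hV : Sq K (t+1) - Sq K (t-1) ≠ 0 := Sq_sub_ne hK (by omega) (by omega)
    rw [gapP_split hjt hts']
    simp only [uq, vq]
    field_simp
    ring

end JuhlAux

namespace JuhlAux

lemma Pn_zero {K : List ℕ} (x : ℕ) : Pn K 0 x = Sn K x := by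
  have := Sn_add_Pn (K := K) (Nat.zero_le x)
  have h0 : Sn K 0 = 0 := rfl
  omega

lemma Sq_length {K : List ℕ} : Sq K K.length = (K.sum : ℚ) := by
  unfold Sq Sn
  rw [List.take_length]

lemma perterm {K : List ℕ} (hK : ∀ x ∈ K, 0 < x) (hs : 1 < K.length) {A : Finset ℕ}
    (hA : A ⊆ Finset.Icc 1 (K.length - 1)) :
    nJuhl (Ilist K A) * ∏ i ∈ Finset.Icc 1 (A.card + 1), mJuhl (Jblock K A i)
    = (-1:ℚ)^(K.length + 1) * ((Nat.factorial (K.sum - 1) : ℚ)^2 * fcq K 0)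
      * glist K 0 (A.sort (· ≤ ·)) := by
  set l := A.sort (· ≤ ·) with hl
  have hlmem : ∀ x ∈ l, 1 ≤ x ∧ x ≤ K.length - 1 := by
    intro x hx
    have := hA ((Finset.mem_sort _).1 hx)
    rwa [Finset.mem_Icc] at this
  have hchain : List.Chain (· < ·) 0 l :=
    chain_of_sorted (Finset.sortedLT_sort A).pairwise (fun x hx => (hlmem x hx).1)
  have hlt : ∀ x ∈ l, x < K.length := by
    intro x hx
    have := (hlmem x hx).2
    omega
  have hle : ∀ x ∈ l, x ≤ K.length := fun x hx => le_of_lt (hlt x hx)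
  have hcard : A.card = l.length := (Finset.length_sort _).symm
  have hIl : Ilist K A = chainMapF (Pn K) K.length 0 l := by
    unfold Ilist Jblock bnds
    rw [hcard]
    exact map_range_chain (Pn K) K.length l 0
  set M := chainMapF (Pn K) K.length 0 l with hM
  have hsum : M.sum = K.sum := by
    rw [hM, chainMapF_Pn_sum l 0 hchain hle, Pn_zero, Sn]
    rw [List.take_length]
  have hlen : M.length = l.length + 1 := chainMapF_length _ _ l 0
  have hm : ∏ i ∈ Finset.Icc 1 (A.card + 1), mJuhl (Jblock K A i)
      = (chainMapF (fun a b => mJuhl ((K.take b).drop a)) K.length 0 l).prod := by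
    rw [hcard, ← Finset.Ico_add_one_right_eq_Icc, Finset.prod_Ico_eq_prod_range]
    simp only [Nat.succ_sub_one, Nat.add_sub_cancel]
    rw [← prod_range_chain (fun a b => mJuhl ((K.take b).drop a)) K.length l 0]
    apply Finset.prod_congr rfl
    intro i _
    rw [show 1 + i = i + 1 from by omega]
    rfl
  have hn : nJuhl (Ilist K A)
      = (Nat.factorial (K.sum - 1) : ℚ)^2
        * (chainMapF (fun a b => (1:ℚ)/((Nat.factorial (Pn K a b - 1) : ℚ))^2)
            K.length 0 l).prod
        * (l.map (uq K)).prod := by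
    rw [hIl]
    simp only [nJuhl]
    rw [hsum]
    congr 1
    · congr 1
      calc ∏ i ∈ Finset.range M.length,
            (1:ℚ)/((Nat.factorial (M.getD i 0 - 1) : ℚ))^2
          = (M.map (fun p => (1:ℚ)/((Nat.factorial (p - 1) : ℚ))^2)).prod :=
            prod_range_getD 0 (fun p => (1:ℚ)/((Nat.factorial (p - 1) : ℚ))^2) M
        _ = (chainMapF (fun a b => (1:ℚ)/((Nat.factorial (Pn K a b - 1) : ℚ))^2)
              K.length 0 l).prod := by
            rw [hM, map_chainMapF]
    · rw [show M.length - 1 = l.length from by omega]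
      have hterm : ∀ t ∈ Finset.range l.length,
          (1:ℚ) / (((M.take (t+1)).sum : ℚ) * ((M.drop (t+1)).sum : ℚ))
          = uq K (l.getD t 0) := by
        intro t ht
        rw [Finset.mem_range] at ht
        have htake : (M.take (t+1)).sum = Sn K (l.getD t 0) := by
          rw [hM, chainMapF_take_sum l 0 hchain t ht, Pn_zero]
        have hdrop : (M.drop (t+1)).sum = K.sum - Sn K (l.getD t 0) := by
          have := List.sum_take_add_sum_drop M (t+1)
          omega
        have hSle : Sn K (l.getD t 0) ≤ K.sum := by
          have := List.sum_take_add_sum_drop M (t+1)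
          omega
        rw [htake, hdrop, uq]
        have h1 : ((K.sum - Sn K (l.getD t 0) : ℕ) : ℚ)
            = Sq K K.length - Sq K (l.getD t 0) := by
          rw [Sq_length]
          unfold Sq
          push_cast [Nat.cast_sub hSle]
          ring
        rw [h1]
        rfl
      rw [Finset.prod_congr rfl hterm]
      exact prod_range_getD 0 (uq K) l
  rw [hn, hm]
  have hkey := key_chain hK l 0 hchain (by omega) hlt
  calc (Nat.factorial (K.sum - 1) : ℚ)^2
        * (chainMapF (fun a b => (1:ℚ)/((Nat.factorial (Pn K a b - 1) : ℚ))^2)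
            K.length 0 l).prod
        * (l.map (uq K)).prod
        * (chainMapF (fun a b => mJuhl ((K.take b).drop a)) K.length 0 l).prod
      = (Nat.factorial (K.sum - 1) : ℚ)^2
        * ((chainMapF (fun a b => (1:ℚ)/((Nat.factorial (Pn K a b - 1) : ℚ))^2)
            K.length 0 l).prod
          * (chainMapF (fun a b => mJuhl ((K.take b).drop a)) K.length 0 l).prod
          * (l.map (uq K)).prod) := by ring
    _ = (Nat.factorial (K.sum - 1) : ℚ)^2
        * ((-1:ℚ)^(K.length - 0 + 1) * fcq K 0 * glist K 0 l) := by rw [hkey]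
    _ = (-1:ℚ)^(K.length + 1) * ((Nat.factorial (K.sum - 1) : ℚ)^2 * fcq K 0)
        * glist K 0 l := by
        rw [Nat.sub_zero]
        ring

end JuhlAux

/-- Vanishing of composition coefficients: for `s > 1` and a composition `K = (K_1, ..., K_s)`,
`∑_{A ⊆ {1,...,s-1}} n_I m_{J_1} ⋯ m_{J_r} = 0`. -/
theorem sum_nJuhl_mJuhl_eq_zero (K : List ℕ) (hs : 1 < K.length) (hK : ∀ x ∈ K, 0 < x) :
    ∑ A ∈ (Finset.Icc 1 (K.length - 1)).powerset,
        nJuhl (Ilist K A) * ∏ i ∈ Finset.Icc 1 (A.card + 1), mJuhl (Jblock K A i)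
      = 0 := by
  have hper : ∀ A ∈ (Finset.Icc 1 (K.length - 1)).powerset,
      nJuhl (Ilist K A) * ∏ i ∈ Finset.Icc 1 (A.card + 1), mJuhl (Jblock K A i)
      = (-1:ℚ)^(K.length + 1)
          * ((Nat.factorial (K.sum - 1) : ℚ)^2 * JuhlAux.fcq K 0)
          * JuhlAux.glist K 0 (A.sort (· ≤ ·)) :=
    fun A hA => JuhlAux.perterm hK hs (Finset.mem_powerset.1 hA)
  rw [Finset.sum_congr rfl hper, ← Finset.mul_sum]
  rw [JuhlAux.claimB hK hs K.length 1 0 (by omega) (by omega) (by omega)]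
  simp [JuhlAux.Sq_zero]
end

section
/- Inversion of the n and m transforms: Let A be a (possibly noncommutative) ℚ-algebra and let (P_{2N})_{N≥1} be elements of A. Define M̄_{2N} = ∑_{|I|=N} m_I P_{2I}, where P_{2I} = P_{2I_1}⋯P_{2I_r} and the sum is over compositions I of N. Then for every N ≥ 1, P_{2N} = ∑_{|I|=N} n_I M̄_{2I}, where M̄_{2I} = M̄_{2I_1}⋯M̄_{2I_r}. -/
open Finset

set_option maxHeartbeats 1600000

namespace JuhlProofAux

/-! ### Scalar-level machinery -/

/-- `k! * (k-1)!` as a rational. -/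
noncomputable def ffq (k : ℕ) : ℚ := (Nat.factorial k : ℚ) * (Nat.factorial (k - 1) : ℚ)

lemma ffq_ne_zero (k : ℕ) : ffq k ≠ 0 := by
  have h1 : (Nat.factorial k : ℚ) ≠ 0 := Nat.cast_ne_zero.2 (Nat.factorial_ne_zero k)
  have h2 : (Nat.factorial (k - 1) : ℚ) ≠ 0 := Nat.cast_ne_zero.2 (Nat.factorial_ne_zero _)
  exact mul_ne_zero h1 h2

/-- The multiplicative core of the Juhl `m` constant, defined recursively. -/
noncomputable def cc : List ℕ → ℚ
  | [] => -1
  | [a] => 1 / ffq a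
  | a :: b :: t => -(1 / ffq a) * (1 / ((a : ℚ) + (b : ℚ))) * cc (b :: t)

/-- Nearest-neighbour coupling product. -/
noncomputable def pp : List ℕ → ℚ
  | a :: b :: t => (1 / ((a : ℚ) + (b : ℚ))) * pp (b :: t)
  | _ => 1

noncomputable def ww (G : List ℕ) : ℚ := (G.sum : ℚ) * cc G

noncomputable def uh (N : ℕ) : List ℕ → ℚ
  | [] => 1
  | a :: t => cc (a :: t) / ((N : ℚ) - (a : ℚ))

lemma Skey : ∀ (l : List ℕ), (∀ x ∈ l, 0 < x) →
    ∑ p ∈ Finset.range (l.length - 1), cc (l.take (p + 1)) * ww (l.drop (p + 1))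
    = (l.sum : ℚ) * ((l.headI : ℚ) - (l.sum : ℚ)) * cc l := by
  intro l
  induction l with
  | nil => simp
  | cons a T IH =>
    intro hpos
    cases T with
    | nil => simp
    | cons b T' =>
      have hab : ((a : ℚ) + (b : ℚ)) ≠ 0 := by
        have ha : 0 < a := hpos a (by simp)
        have h0 : (0 : ℚ) < (a : ℚ) + (b : ℚ) := by
          have h0a : (0:ℚ) < (a:ℚ) := by exact_mod_cast ha
          have hb : (0:ℚ) ≤ (b:ℚ) := by positivity
          linarith
        exact ne_of_gt h0
      have hlen : (a :: b :: T').length - 1 = T'.length + 1 := by simp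
      rw [hlen, Finset.sum_range_succ']
      have hterm : ∀ p ∈ Finset.range T'.length,
          cc ((a :: b :: T').take (p + 1 + 1)) * ww ((a :: b :: T').drop (p + 1 + 1))
          = (-(1 / ffq a) * (1 / ((a : ℚ) + (b : ℚ)))) *
            (cc ((b :: T').take (p + 1)) * ww ((b :: T').drop (p + 1))) := by
        intro p _
        have h1 : (a :: b :: T').take (p + 1 + 1) = a :: (b :: T').take (p + 1) := by
          simp [List.take_succ_cons]
        have h2 : (a :: b :: T').drop (p + 1 + 1) = (b :: T').drop (p + 1) := by
          simp [List.drop_succ_cons]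
        rw [h1, h2]
        have h3 : (b :: T').take (p + 1) = b :: T'.take p := by simp [List.take_succ_cons]
        rw [h3, show cc (a :: b :: T'.take p)
            = -(1 / ffq a) * (1 / ((a : ℚ) + (b : ℚ))) * cc (b :: T'.take p) from rfl]
        rw [← h3]
        ring
      rw [Finset.sum_congr rfl hterm, ← Finset.mul_sum]
      have hT : ∀ x ∈ b :: T', 0 < x := fun x hx => hpos x (by simp [hx])
      have IH' := IH hT
      simp only [List.length_cons, Nat.add_sub_cancel] at IH'
      rw [IH']
      have hs : ((a :: b :: T').sum : ℚ) = (a : ℚ) + ((b :: T').sum : ℚ) := by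
        push_cast [List.sum_cons]; ring
      have htake1 : (a :: b :: T').take (0 + 1) = [a] := by simp
      have hdrop1 : (a :: b :: T').drop (0 + 1) = b :: T' := by simp
      rw [htake1, hdrop1, hs]
      show -(1 / ffq a) * (1 / ((a:ℚ) + b)) * (((b :: T').sum : ℚ) *
            (((b :: T').headI : ℚ) - ((b :: T').sum:ℚ)) * cc (b :: T'))
          + cc [a] * ww (b :: T')
          = ((a:ℚ) + ((b::T').sum : ℚ)) * ((a:ℚ) - ((a:ℚ) + ((b::T').sum:ℚ))) * cc (a :: b :: T')
      rw [show cc (a :: b :: T') = -(1 / ffq a) * (1 / ((a : ℚ) + (b : ℚ))) * cc (b :: T') from rfl,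
        show cc [a] = 1 / ffq a from rfl, ww]
      have hh : ((b :: T').headI : ℚ) = (b : ℚ) := by simp
      rw [hh]
      field_simp [ffq_ne_zero a, hab]
      ring

lemma lemA (N : ℕ) (a : ℕ) (T : List ℕ) (hT : ∀ x ∈ a :: T, 0 < x)
    (haN : (a : ℚ) < (N : ℚ)) :
    ∑ p ∈ Finset.range (a :: T).length, uh N ((a :: T).take p) * ww ((a :: T).drop p)
    = ((a :: T).sum : ℚ) * ((N : ℚ) - ((a :: T).sum : ℚ)) * cc (a :: T) / ((N : ℚ) - (a : ℚ)) := by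
  have hNa : (N : ℚ) - (a : ℚ) ≠ 0 := by
    have h : (a : ℚ) ≠ (N : ℚ) := ne_of_lt haN
    exact sub_ne_zero.2 (Ne.symm h)
  have hlen : (a :: T).length = T.length + 1 := by simp
  rw [hlen, Finset.sum_range_succ']
  have hterm : ∀ p ∈ Finset.range T.length,
      uh N ((a :: T).take (p + 1)) * ww ((a :: T).drop (p + 1))
      = ((N : ℚ) - (a : ℚ))⁻¹ * (cc ((a :: T).take (p + 1)) * ww ((a :: T).drop (p + 1))) := by
    intro p _
    have h1 : (a :: T).take (p + 1) = a :: T.take p := by simp [List.take_succ_cons]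
    rw [h1, show uh N (a :: T.take p) = cc (a :: T.take p) / ((N : ℚ) - (a : ℚ)) from rfl]
    rw [← h1]
    field_simp
  rw [Finset.sum_congr rfl hterm, ← Finset.mul_sum]
  have hlen2 : T.length = (a :: T).length - 1 := by simp
  rw [hlen2, Skey (a :: T) hT]
  have h0 : (a :: T).take 0 = [] := rfl
  have h0' : (a :: T).drop 0 = a :: T := rfl
  rw [h0, h0', show uh N ([] : List ℕ) = 1 from rfl, ww]
  have hh : ((a :: T).headI : ℚ) = (a : ℚ) := by simp
  rw [hh]
  field_simp
  ring

/-! ### Compositions as a finset of lists -/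

/-- The finset of blocks-lists of compositions of `n`. -/
noncomputable def comps (n : ℕ) : Finset (List ℕ) :=
  Finset.univ.image (fun c : Composition n => c.blocks)

lemma mem_comps {n : ℕ} {l : List ℕ} : l ∈ comps n ↔ l.sum = n ∧ ∀ x ∈ l, 0 < x := by
  constructor
  · intro h
    simp only [comps, Finset.mem_image, Finset.mem_univ, true_and] at h
    obtain ⟨c, rfl⟩ := h
    exact ⟨c.blocks_sum, fun x hx => c.blocks_pos hx⟩
  · rintro ⟨h1, h2⟩
    simp only [comps, Finset.mem_image, Finset.mem_univ, true_and]
    exact ⟨⟨l, fun hi => h2 _ hi, h1⟩, rfl⟩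

lemma sum_comps {β : Type*} [AddCommMonoid β] (n : ℕ) (f : List ℕ → β) :
    ∑ c : Composition n, f c.blocks = ∑ l ∈ comps n, f l := by
  rw [comps, Finset.sum_image]
  intro c _ c' _ h
  exact Composition.ext h

lemma comps_zero : comps 0 = {([] : List ℕ)} := by
  ext l
  simp only [mem_comps, Finset.mem_singleton]
  constructor
  · rintro ⟨h1, h2⟩
    cases l with
    | nil => rfl
    | cons a t =>
      exfalso
      have ha := h2 a (by simp)
      have hle : a ≤ (a :: t).sum := List.le_sum_of_mem (by simp)
      omega
  · rintro rfl; simp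

lemma nonnil_of_mem_comps {n : ℕ} (hn : 1 ≤ n) {l : List ℕ} (hl : l ∈ comps n) : l ≠ [] := by
  intro h
  rw [mem_comps] at hl
  rw [h] at hl
  simp at hl
  omega

lemma sum_comps_succ {β : Type*} [AddCommMonoid β] {n : ℕ} (hn : 1 ≤ n) (f : List ℕ → β) :
    ∑ l ∈ comps n, f l = ∑ k ∈ Finset.Icc 1 n, ∑ l ∈ comps (n - k), f (l ++ [k]) := by
  rw [Finset.sum_sigma']
  refine Finset.sum_nbij' (i := fun l => (⟨n - l.dropLast.sum, l.dropLast⟩ : Σ _k : ℕ, List ℕ))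
    (j := fun x => x.2 ++ [x.1]) ?_ ?_ ?_ ?_ ?_
  · intro l hl
    have hne : l ≠ [] := nonnil_of_mem_comps hn hl
    obtain ⟨hsum, hpos⟩ := mem_comps.1 hl
    have hpos' : 0 < l.getLast hne := hpos _ (List.getLast_mem hne)
    have hdl : l.dropLast.sum + l.getLast hne = n := by
      conv_rhs => rw [← hsum, ← List.dropLast_append_getLast hne]
      simp
    rw [Finset.mem_sigma, Finset.mem_Icc, mem_comps]
    dsimp only
    exact ⟨⟨by omega, by omega⟩, by omega,
      fun x hx => hpos x (List.dropLast_subset l hx)⟩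
  · rintro ⟨k, l⟩ hx
    rw [Finset.mem_sigma, Finset.mem_Icc] at hx
    dsimp only at hx ⊢
    obtain ⟨⟨hk1, hk2⟩, hl⟩ := hx
    obtain ⟨hsum, hpos⟩ := mem_comps.1 hl
    rw [mem_comps]
    constructor
    · simp only [List.sum_append, List.sum_cons, List.sum_nil, hsum]; omega
    · intro x hx
      rcases List.mem_append.1 hx with h' | h'
      · exact hpos x h'
      · simp at h'; omega
  · intro l hl
    have hne : l ≠ [] := nonnil_of_mem_comps hn hl
    obtain ⟨hsum, hpos⟩ := mem_comps.1 hl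
    have hdl : l.dropLast.sum + l.getLast hne = n := by
      conv_rhs => rw [← hsum, ← List.dropLast_append_getLast hne]
      simp
    have hk : n - l.dropLast.sum = l.getLast hne := by omega
    rw [hk, List.dropLast_append_getLast]
  · rintro ⟨k, l⟩ hx
    rw [Finset.mem_sigma, Finset.mem_Icc] at hx
    dsimp only at hx ⊢
    obtain ⟨⟨hk1, hk2⟩, hl⟩ := hx
    obtain ⟨hsum, hpos⟩ := mem_comps.1 hl
    have h2 : (l ++ [k]).dropLast = l := List.dropLast_concat ..
    rw [h2]
    have h1 : n - l.sum = k := by omega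
    rw [h1]
  · intro l hl
    have hne : l ≠ [] := nonnil_of_mem_comps hn hl
    obtain ⟨hsum, hpos⟩ := mem_comps.1 hl
    have hdl : l.dropLast.sum + l.getLast hne = n := by
      conv_rhs => rw [← hsum, ← List.dropLast_append_getLast hne]
      simp
    have hk : n - l.dropLast.sum = l.getLast hne := by omega
    rw [hk, List.dropLast_append_getLast]

lemma sum_take_drop (l : List ℕ) (p : ℕ) : (l.take p).sum + (l.drop p).sum = l.sum := by
  rw [← List.sum_append, List.take_append_drop]

lemma splitPair {β : Type*} [AddCommMonoid β] (n : ℕ) (h : List ℕ → List ℕ → β) :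
    ∑ l ∈ comps n, ∑ p ∈ Finset.range l.length, h (l.take p) (l.drop p)
    = ∑ k ∈ Finset.Icc 1 n, ∑ g ∈ comps k, ∑ l' ∈ comps (n - k), h l' g := by
  have hinner : ∀ k, (∑ g ∈ comps k, ∑ l' ∈ comps (n - k), h l' g)
      = ∑ y ∈ (comps k).sigma (fun _ => comps (n - k)), h y.2 y.1 := by
    intro k
    rw [Finset.sum_sigma]
  rw [Finset.sum_congr rfl (fun k _ => hinner k), Finset.sum_sigma', Finset.sum_sigma']
  refine Finset.sum_nbij' (i := fun x => ⟨(x.1.drop x.2).sum, x.1.drop x.2, x.1.take x.2⟩)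
    (j := fun y => ⟨y.2.2 ++ y.2.1, y.2.2.length⟩) ?_ ?_ ?_ ?_ ?_
  · rintro ⟨l, p⟩ hx
    rw [Finset.mem_sigma, Finset.mem_range] at hx
    dsimp only at hx ⊢
    obtain ⟨hl, hp⟩ := hx
    obtain ⟨hsum, hpos⟩ := mem_comps.1 hl
    have hdne : l.drop p ≠ [] := by
      intro hcon
      have hlen := congrArg List.length hcon
      simp only [List.length_drop, List.length_nil] at hlen
      omega
    have hdpos : ∀ x ∈ l.drop p, 0 < x := fun x hx => hpos x (List.drop_subset _ l hx)
    have hdsum : 0 < (l.drop p).sum := List.sum_pos _ hdpos hdne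
    have htd := sum_take_drop l p
    rw [Finset.mem_sigma, Finset.mem_sigma, Finset.mem_Icc, mem_comps, mem_comps]
    dsimp only
    exact ⟨⟨by omega, by omega⟩, ⟨rfl, hdpos⟩,
      by omega, fun x hx => hpos x (List.take_subset _ l hx)⟩
  · rintro ⟨k, g, l'⟩ hy
    rw [Finset.mem_sigma, Finset.mem_sigma, Finset.mem_Icc] at hy
    dsimp only at hy ⊢
    obtain ⟨⟨hk1, hk2⟩, hg, hl'⟩ := hy
    obtain ⟨hgs, hgp⟩ := mem_comps.1 hg
    obtain ⟨hls, hlp⟩ := mem_comps.1 hl'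
    have hgne : g ≠ [] := by
      intro hcon; rw [hcon] at hgs; simp at hgs; omega
    rw [Finset.mem_sigma, mem_comps, Finset.mem_range]
    dsimp only
    refine ⟨⟨?_, ?_⟩, ?_⟩
    · simp only [List.sum_append, hgs, hls]; omega
    · intro x hx
      rcases List.mem_append.1 hx with h' | h'
      exacts [hlp x h', hgp x h']
    · rw [List.length_append]
      have := List.length_pos_iff.2 hgne
      omega
  · rintro ⟨l, p⟩ hx
    rw [Finset.mem_sigma, Finset.mem_range] at hx
    dsimp only at hx ⊢
    obtain ⟨hl, hp⟩ := hx
    have h2 : (l.take p).length = p := by rw [List.length_take]; omega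
    rw [List.take_append_drop, h2]
  · rintro ⟨k, g, l'⟩ hy
    rw [Finset.mem_sigma, Finset.mem_sigma, Finset.mem_Icc] at hy
    dsimp only at hy ⊢
    obtain ⟨⟨hk1, hk2⟩, hg, hl'⟩ := hy
    obtain ⟨hgs, hgp⟩ := mem_comps.1 hg
    rw [List.drop_left, List.take_left, hgs]
  · rintro ⟨l, p⟩ _
    rfl

/-! ### Glue between the given Juhl constants and the recursive quantities -/

lemma prod_range_getD (f : ℕ → ℚ) : ∀ (l : List ℕ),
    ∏ j ∈ Finset.range l.length, f (l.getD j 0) = (l.map f).prod := by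
  intro l
  induction l with
  | nil => simp
  | cons a t IH =>
    rw [List.length_cons, Finset.prod_range_succ']
    simp only [List.getD_cons_succ, List.getD_cons_zero]
    rw [IH, List.map_cons, List.prod_cons]
    ring

lemma pp_eq : ∀ (l : List ℕ),
    ∏ j ∈ Finset.range (l.length - 1), (1:ℚ)/((l.getD j 0 : ℚ) + (l.getD (j+1) 0 : ℚ)) = pp l
  | [] => by simp [pp]
  | [a] => by simp [pp]
  | a :: b :: t => by
    have hlen : (a :: b :: t).length - 1 = (b :: t).length - 1 + 1 := by simp
    rw [hlen, Finset.prod_range_succ']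
    have hstep : ∀ j ∈ Finset.range ((b :: t).length - 1),
        (1:ℚ)/(((a :: b :: t).getD (j+1) 0 : ℚ) + ((a :: b :: t).getD (j+1+1) 0 : ℚ))
        = (1:ℚ)/(((b :: t).getD j 0 : ℚ) + ((b :: t).getD (j+1) 0 : ℚ)) := by
      intro j _
      simp [List.getD_cons_succ]
    rw [Finset.prod_congr rfl hstep, pp_eq (b :: t)]
    show pp (b :: t) * ((1:ℚ)/((a:ℚ) + (b:ℚ))) = pp (a :: b :: t)
    rw [show pp (a :: b :: t) = (1 / ((a : ℚ) + (b : ℚ))) * pp (b :: t) from rfl]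
    ring

lemma cc_eq : ∀ (l : List ℕ), cc l
    = (-1 : ℚ)^(l.length + 1) * (l.map (fun j => (1:ℚ) / ffq j)).prod * pp l
  | [] => by simp [cc, pp]
  | [a] => by simp [cc, pp]
  | a :: b :: t => by
    rw [show cc (a :: b :: t) = -(1 / ffq a) * (1 / ((a : ℚ) + (b : ℚ))) * cc (b :: t) from rfl,
      cc_eq (b :: t),
      show pp (a :: b :: t) = (1 / ((a : ℚ) + (b : ℚ))) * pp (b :: t) from rfl]
    simp only [List.map_cons, List.prod_cons, List.length_cons]
    rw [show (-1:ℚ)^(t.length + 1 + 1 + 1) = (-1:ℚ)^(t.length + 1 + 1) * (-1) by ring]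
    ring

lemma mJuhl_cc (l : List ℕ) :
    mJuhl l = (Nat.factorial l.sum : ℚ) * (Nat.factorial (l.sum - 1) : ℚ) * cc l := by
  rw [mJuhl, cc_eq l, ← pp_eq l, ← prod_range_getD (fun j => (1:ℚ) / ffq j) l]
  simp only [ffq]
  ring

lemma ww_of_mJuhl {k : ℕ} (hk : 1 ≤ k) {G : List ℕ} (hG : G.sum = k) :
    (1 / ((Nat.factorial (k-1) : ℚ))^2) * mJuhl G = ww G := by
  obtain ⟨m, rfl⟩ : ∃ m, k = m + 1 := ⟨k - 1, by omega⟩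
  rw [mJuhl_cc, ww, hG]
  have hfact : (Nat.factorial (m+1) : ℚ) = ((m:ℚ)+1) * (Nat.factorial m : ℚ) := by
    rw [Nat.factorial_succ]; push_cast; ring
  have hm : (Nat.factorial m : ℚ) ≠ 0 := Nat.cast_ne_zero.2 (Nat.factorial_ne_zero m)
  simp only [Nat.add_sub_cancel, hfact]
  field_simp
  push_cast
  ring

/-- The `n`-transform partial coefficient. -/
noncomputable def nu (N : ℕ) (J : List ℕ) : ℚ :=
  (J.map (fun j => (1:ℚ) / ((Nat.factorial (j-1) : ℚ))^2)).prod *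
    ∏ p ∈ Finset.range J.length,
      (1:ℚ) / ((((J.take (p+1)).sum : ℚ)) * ((N : ℚ) - (((J.take (p+1)).sum : ℚ))))

lemma nu_nil (N : ℕ) : nu N [] = 1 := by simp [nu]

lemma nu_append (N : ℕ) (J : List ℕ) (k : ℕ) :
    nu N (J ++ [k]) = nu N J * ((1:ℚ) / ((Nat.factorial (k-1) : ℚ))^2) *
      ((1:ℚ) / ((((J.sum + k : ℕ) : ℚ)) * ((N : ℚ) - (((J.sum + k : ℕ) : ℚ))))) := by
  rw [nu, nu]
  rw [List.map_append, List.prod_append, List.map_cons, List.map_nil, List.prod_cons,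
    List.prod_nil]
  have hlen : (J ++ [k]).length = J.length + 1 := by simp
  rw [hlen, Finset.prod_range_succ]
  have htake : (J ++ [k]).take (J.length + 1) = J ++ [k] := by
    rw [show J.length + 1 = (J ++ [k]).length by simp, List.take_length]
  have hsum : ((J ++ [k]).take (J.length + 1)).sum = J.sum + k := by
    rw [htake]; simp
  have hstep : ∀ p ∈ Finset.range J.length,
      (1:ℚ) / (((((J ++ [k]).take (p+1)).sum : ℚ)) * ((N : ℚ) - ((((J ++ [k]).take (p+1)).sum : ℚ))))
      = (1:ℚ) / ((((J.take (p+1)).sum : ℚ)) * ((N : ℚ) - (((J.take (p+1)).sum : ℚ)))) := by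
    intro p hp
    rw [Finset.mem_range] at hp
    rw [List.take_append_of_le_length (by omega)]
  rw [Finset.prod_congr rfl hstep, hsum]
  ring

lemma nJuhl_glue (N : ℕ) (J : List ℕ) (k : ℕ) (hsum : J.sum + k = N) :
    nJuhl (J ++ [k]) = ((Nat.factorial (N-1) : ℚ))^2 *
      ((1:ℚ) / ((Nat.factorial (k-1) : ℚ))^2) * nu N J := by
  rw [nJuhl, nu]
  have hJk : (J ++ [k]).sum = N := by simp [hsum]
  rw [hJk]
  rw [prod_range_getD (fun x => (1:ℚ) / ((Nat.factorial (x-1) : ℚ))^2) (J ++ [k])]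
  rw [List.map_append, List.prod_append, List.map_cons, List.map_nil, List.prod_cons,
    List.prod_nil]
  have hlen : (J ++ [k]).length - 1 = J.length := by simp
  rw [hlen]
  have hstep : ∀ p ∈ Finset.range J.length,
      (1:ℚ) / (((((J ++ [k]).take (p+1)).sum : ℚ)) * ((((J ++ [k]).drop (p+1)).sum : ℚ)))
      = (1:ℚ) / ((((J.take (p+1)).sum : ℚ)) * ((N : ℚ) - (((J.take (p+1)).sum : ℚ)))) := by
    intro p hp
    rw [Finset.mem_range] at hp
    have h1 : (J ++ [k]).take (p+1) = J.take (p+1) := List.take_append_of_le_length (by omega)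
    have h2 : ((J ++ [k]).take (p+1)).sum + ((J ++ [k]).drop (p+1)).sum = N := by
      rw [← List.sum_append, List.take_append_drop, hJk]
    have h3 : ((((J ++ [k]).drop (p+1)).sum : ℕ) : ℚ)
        = (N : ℚ) - (((J.take (p+1)).sum : ℚ)) := by
      rw [← h1]
      have h4 : (((J ++ [k]).take (p+1)).sum : ℚ) + (((J ++ [k]).drop (p+1)).sum : ℚ)
          = (N : ℚ) := by exact_mod_cast h2
      linarith
    rw [h3, h1]
  rw [Finset.prod_congr rfl hstep]
  ring

/-! ### The algebra-valued argument -/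

variable {A : Type*} [Ring A] [Algebra ℚ A] (P M : ℕ → A) (N : ℕ)

/-- The partial solution (Poisson-type coefficients), in closed form. -/
noncomputable def UU (σ : ℕ) : A := ∑ J ∈ comps σ, uh N J • (J.map P).prod

lemma UU_zero : UU P N 0 = (1 : A) := by
  rw [UU, comps_zero, Finset.sum_singleton]
  show uh N [] • (List.map P []).prod = 1
  rw [show uh N [] = 1 from rfl]
  simp

/-- Common expansion of `∑ₖ (1/(k-1)!²) • (U_{σ-k} * M k)`. -/
lemma expandSum
    (hM : ∀ n : ℕ, 1 ≤ n → M n = ∑ c : Composition n, mJuhl c.blocks • (c.blocks.map P).prod)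
    (σ : ℕ) :
    ∑ k ∈ Finset.Icc 1 σ, ((1:ℚ) / ((Nat.factorial (k-1) : ℚ))^2) • (UU P N (σ - k) * M k)
    = ∑ l ∈ comps σ,
        (∑ p ∈ Finset.range l.length, uh N (l.take p) * ww (l.drop p)) • (l.map P).prod := by
  have hterm : ∀ k ∈ Finset.Icc 1 σ,
      ((1:ℚ) / ((Nat.factorial (k-1) : ℚ))^2) • (UU P N (σ - k) * M k)
      = ∑ l' ∈ comps (σ - k), ∑ g ∈ comps k,
          (uh N l' * ww g) • ((l' ++ g).map P).prod := by
    intro k hk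
    rw [Finset.mem_Icc] at hk
    rw [hM k hk.1, sum_comps k (fun l => mJuhl l • (l.map P).prod), UU, Finset.sum_mul_sum]
    rw [Finset.smul_sum]
    refine Finset.sum_congr rfl ?_
    intro l' _
    rw [Finset.smul_sum]
    refine Finset.sum_congr rfl ?_
    intro g hg
    rw [smul_mul_assoc, mul_smul_comm, smul_smul, smul_smul]
    have hprod : ((l' ++ g).map P).prod = (l'.map P).prod * (g.map P).prod := by
      rw [List.map_append, List.prod_append]
    rw [hprod]
    have hws : (1 / ((Nat.factorial (k-1) : ℚ))^2) * mJuhl g = ww g :=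
      ww_of_mJuhl hk.1 (mem_comps.1 hg).1
    rw [show (1:ℚ) / ((Nat.factorial (k-1) : ℚ))^2 * uh N l' * mJuhl g
        = uh N l' * ((1 / ((Nat.factorial (k-1) : ℚ))^2) * mJuhl g) by ring, hws]
  rw [Finset.sum_congr rfl hterm]
  have hswap : ∀ k ∈ Finset.Icc 1 σ,
      (∑ l' ∈ comps (σ - k), ∑ g ∈ comps k, (uh N l' * ww g) • ((l' ++ g).map P).prod)
      = ∑ g ∈ comps k, ∑ l' ∈ comps (σ - k), (uh N l' * ww g) • ((l' ++ g).map P).prod :=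
    fun k _ => Finset.sum_comm
  rw [Finset.sum_congr rfl hswap,
    ← splitPair σ (fun l' g => (uh N l' * ww g) • ((l' ++ g).map P).prod)]
  refine Finset.sum_congr rfl ?_
  intro l _
  have hstep : ∀ p ∈ Finset.range l.length,
      (uh N (l.take p) * ww (l.drop p)) • ((l.take p ++ l.drop p).map P).prod
      = (uh N (l.take p) * ww (l.drop p)) • (l.map P).prod := by
    intro p _
    rw [List.take_append_drop]
  rw [Finset.sum_congr rfl hstep, ← Finset.sum_smul]

lemma recU
    (hM : ∀ n : ℕ, 1 ≤ n → M n = ∑ c : Composition n, mJuhl c.blocks • (c.blocks.map P).prod)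
    (σ : ℕ) (h1 : 1 ≤ σ) (h2 : σ < N) :
    ∑ k ∈ Finset.Icc 1 σ, ((1:ℚ) / ((Nat.factorial (k-1) : ℚ))^2) • (UU P N (σ - k) * M k)
    = (((σ : ℚ)) * ((N : ℚ) - (σ : ℚ))) • UU P N σ := by
  rw [expandSum P M N hM σ, UU, Finset.smul_sum]
  refine Finset.sum_congr rfl ?_
  intro l hl
  obtain ⟨hsum, hpos⟩ := mem_comps.1 hl
  have hne : l ≠ [] := by
    intro hcon; rw [hcon] at hsum; simp at hsum; omega
  obtain ⟨a, T, rfl⟩ : ∃ a T, l = a :: T := by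
    cases l with
    | nil => exact absurd rfl hne
    | cons a T => exact ⟨a, T, rfl⟩
  have haN : (a : ℚ) < (N : ℚ) := by
    have han : a ≤ (a :: T).sum := List.le_sum_of_mem (by simp)
    have : a < N := by omega
    exact_mod_cast this
  rw [lemA N a T hpos haN, smul_smul]
  congr 1
  rw [show uh N (a :: T) = cc (a :: T) / ((N : ℚ) - (a : ℚ)) from rfl, hsum]
  field_simp

lemma finalSum
    (hM : ∀ n : ℕ, 1 ≤ n → M n = ∑ c : Composition n, mJuhl c.blocks • (c.blocks.map P).prod)
    (hN : 1 ≤ N) :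
    ∑ k ∈ Finset.Icc 1 N, ((1:ℚ) / ((Nat.factorial (k-1) : ℚ))^2) • (UU P N (N - k) * M k)
    = ((1:ℚ) / ((Nat.factorial (N-1) : ℚ))^2) • P N := by
  rw [expandSum P M N hM N]
  have hNmem : [N] ∈ comps N := by
    rw [mem_comps]
    exact ⟨by simp, by intro x hx; simp at hx; omega⟩
  rw [Finset.sum_eq_single_of_mem [N] hNmem]
  · have h0 : ∑ p ∈ Finset.range ([N] : List ℕ).length, uh N (([N] : List ℕ).take p) * ww (([N] : List ℕ).drop p)
        = (1:ℚ) / ((Nat.factorial (N-1) : ℚ))^2 := by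
      rw [show ([N] : List ℕ).length = 1 from rfl, Finset.sum_range_one]
      rw [show ([N] : List ℕ).take 0 = [] from rfl, show ([N] : List ℕ).drop 0 = [N] from rfl]
      rw [show uh N ([] : List ℕ) = 1 from rfl, ww]
      rw [show cc [N] = 1 / ffq N from rfl]
      obtain ⟨m, rfl⟩ : ∃ m, N = m + 1 := ⟨N - 1, by omega⟩
      have hfact : (Nat.factorial (m+1) : ℚ) = ((m:ℚ)+1) * (Nat.factorial m : ℚ) := by
        rw [Nat.factorial_succ]; push_cast; ring
      have hm : (Nat.factorial m : ℚ) ≠ 0 := Nat.cast_ne_zero.2 (Nat.factorial_ne_zero m)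
      simp only [List.sum_cons, List.sum_nil, Nat.add_sub_cancel, ffq, Nat.add_sub_cancel, hfact]
      push_cast
      field_simp
      ring
    rw [h0]
    have hprod : (([N] : List ℕ).map P).prod = P N := by simp
    rw [hprod]
  · intro l hl hlne
    obtain ⟨hsum, hpos⟩ := mem_comps.1 hl
    have hne : l ≠ [] := by
      intro hcon; rw [hcon] at hsum; simp at hsum; omega
    obtain ⟨a, T, rfl⟩ : ∃ a T, l = a :: T := by
      cases l with
      | nil => exact absurd rfl hne
      | cons a T => exact ⟨a, T, rfl⟩
    have hT : T ≠ [] := by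
      intro hcon
      rw [hcon] at hsum hlne
      simp at hsum
      rw [hsum] at hlne
      exact hlne rfl
    have hTpos : 0 < T.sum := List.sum_pos T (fun x hx => hpos x (by simp [hx])) hT
    have haN : (a : ℚ) < (N : ℚ) := by
      have h5 : (a :: T).sum = a + T.sum := by simp
      have : a < N := by omega
      exact_mod_cast this
    rw [lemA N a T hpos haN, hsum]
    rw [show (N:ℚ) - (N:ℚ) = 0 by ring]
    simp

lemma VU
    (hM : ∀ n : ℕ, 1 ≤ n → M n = ∑ c : Composition n, mJuhl c.blocks • (c.blocks.map P).prod) :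
    ∀ σ : ℕ, σ < N → (∑ J ∈ comps σ, nu N J • (J.map M).prod) = UU P N σ := by
  intro σ
  induction σ using Nat.strong_induction_on with
  | _ σ IH =>
    intro hσ
    rcases Nat.eq_zero_or_pos σ with rfl | hpos
    · rw [comps_zero, Finset.sum_singleton, UU_zero]
      simp [nu_nil]
    · have h1 : 1 ≤ σ := hpos
      have hq : ((σ : ℚ) * ((N : ℚ) - (σ : ℚ))) ≠ 0 := by
        have hσ0 : (0:ℚ) < (σ:ℚ) := by exact_mod_cast hpos
        have hσN : (σ:ℚ) < (N:ℚ) := by exact_mod_cast hσ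
        have : (0:ℚ) < (N:ℚ) - (σ:ℚ) := by linarith
        positivity
      rw [sum_comps_succ h1 (fun l => nu N l • (l.map M).prod)]
      have hterm : ∀ k ∈ Finset.Icc 1 σ,
          (∑ J ∈ comps (σ - k), nu N (J ++ [k]) • ((J ++ [k]).map M).prod)
          = ((σ : ℚ) * ((N : ℚ) - (σ : ℚ)))⁻¹ •
              (((1:ℚ) / ((Nat.factorial (k-1) : ℚ))^2) • (UU P N (σ - k) * M k)) := by
        intro k hk
        rw [Finset.mem_Icc] at hk
        have hIH : (∑ J ∈ comps (σ - k), nu N J • (J.map M).prod) = UU P N (σ - k) :=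
          IH (σ - k) (by omega) (by omega)
        rw [← hIH, Finset.sum_mul, Finset.smul_sum, Finset.smul_sum]
        refine Finset.sum_congr rfl ?_
        intro J hJ
        obtain ⟨hJs, _⟩ := mem_comps.1 hJ
        have hsk : J.sum + k = σ := by omega
        have hprod : ((J ++ [k]).map M).prod = (J.map M).prod * M k := by
          rw [List.map_append, List.prod_append]
          simp
        rw [nu_append N J k, hsk, hprod, smul_mul_assoc, smul_smul, smul_smul]
        congr 1
        ring
      rw [Finset.sum_congr rfl hterm, ← Finset.smul_sum,
        recU P M N hM σ h1 hσ, smul_smul, inv_mul_cancel₀ hq, one_smul]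

end JuhlProofAux

/-- Inversion of the `n` and `m` transforms: if `M̄_{2N} = ∑_{|I|=N} m_I P_{2I}`, then
`P_{2N} = ∑_{|I|=N} n_I M̄_{2I}`, sums over compositions of `N`. -/
theorem nJuhl_mJuhl_inversion (A : Type*) [Ring A] [Algebra ℚ A] (P M : ℕ → A)
    (hM : ∀ N : ℕ, 1 ≤ N →
      M N = ∑ c : Composition N, mJuhl c.blocks • (c.blocks.map P).prod) :
    ∀ N : ℕ, 1 ≤ N →
      P N = ∑ c : Composition N, nJuhl c.blocks • (c.blocks.map M).prod := by
  intro N hN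
  open JuhlProofAux in
  have key : ∑ c : Composition N, nJuhl c.blocks • (c.blocks.map M).prod = P N := by
    rw [JuhlProofAux.sum_comps N (fun l => nJuhl l • (l.map M).prod),
      JuhlProofAux.sum_comps_succ hN (fun l => nJuhl l • (l.map M).prod)]
    have hfne : ((Nat.factorial (N-1) : ℚ))^2 ≠ 0 := by
      have : (Nat.factorial (N-1) : ℚ) ≠ 0 := Nat.cast_ne_zero.2 (Nat.factorial_ne_zero _)
      positivity
    have hterm : ∀ k ∈ Finset.Icc 1 N,
        (∑ J ∈ JuhlProofAux.comps (N - k), nJuhl (J ++ [k]) • ((J ++ [k]).map M).prod)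
        = ((Nat.factorial (N-1) : ℚ))^2 •
            (((1:ℚ) / ((Nat.factorial (k-1) : ℚ))^2) • (JuhlProofAux.UU P N (N - k) * M k)) := by
      intro k hk
      rw [Finset.mem_Icc] at hk
      have hVU : (∑ J ∈ JuhlProofAux.comps (N - k), JuhlProofAux.nu N J • (J.map M).prod)
          = JuhlProofAux.UU P N (N - k) :=
        JuhlProofAux.VU P M N hM (N - k) (by omega)
      rw [← hVU, Finset.sum_mul, Finset.smul_sum, Finset.smul_sum]
      refine Finset.sum_congr rfl ?_
      intro J hJ
      obtain ⟨hJs, _⟩ := JuhlProofAux.mem_comps.1 hJ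
      have hsk : J.sum + k = N := by omega
      have hprod : ((J ++ [k]).map M).prod = (J.map M).prod * M k := by
        rw [List.map_append, List.prod_append]
        simp
      rw [JuhlProofAux.nJuhl_glue N J k hsk, hprod, smul_mul_assoc, smul_smul, smul_smul]
    rw [Finset.sum_congr rfl hterm, ← Finset.smul_sum,
      JuhlProofAux.finalSum P M N hM hN, smul_smul]
    rw [show ((Nat.factorial (N-1) : ℚ))^2 * ((1:ℚ) / ((Nat.factorial (N-1) : ℚ))^2) = 1 by
      field_simp]
    rw [one_smul]
  exact key.symm
end

section
/- With x_1, x_2, ... noncommuting indeterminates and L_k = s d²/ds² − k d/ds + X(s) where X(s) = ∑_{a≥1} x_a s^{a−1}, for any N ≥ 1 and any integer a with 1 ≤ a ≤ N: L_{1−N} L_{3−N} ⋯ L_{N−3} (s^{a−1}) |_{s=0} = ∑_{|I|=N−a} n̄_{(I,a)} x_{I_1}⋯x_{I_r}, where the sum is over compositions I of N−a (including the empty composition when a = N, contributing n̄_{(a)} = 1 times the empty product), and n̄_{(I,a)} = (N−1)!² / ∏_{k=1}^{r} ((∑_{j=1}^k (I,a)_j)(∑_{j=k+1}^{r+1} (I,a)_j))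 with (I,a) = (I_1,...,I_r,a). -/
open Finset

/-! ### Auxiliary definitions -/

/-- `CC N m = ∏_{k=1}^m k (N - k)`. -/
noncomputable def CC (N m : ℕ) : ℚ := ∏ k ∈ range m, (((k : ℚ)+1) * ((N : ℚ) - ((k : ℚ)+1)))

/-- `TT N n = ∑_{I ⊨ n} (∏_k S_k (N - S_k))⁻¹ x_I`, defined by recursion on `n`. -/
noncomputable def TT (N : ℕ) : ℕ → FreeAlgebra ℚ ℕ
  | 0 => 1
  | (n+1) => ((((n:ℚ)+1) * ((N:ℚ) - ((n:ℚ)+1)))⁻¹) •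
      ∑ i ∈ Finset.range (n+1), TT N (n - i) * FreeAlgebra.ι ℚ (i+1)
  decreasing_by exact Nat.lt_succ_of_le (Nat.sub_le n i)

lemma TT_zero (N : ℕ) : TT N 0 = 1 := by rw [TT]

lemma TT_succ_eq (N n : ℕ) (h : (((n:ℚ)+1) * ((N:ℚ) - ((n:ℚ)+1))) ≠ 0) :
    (((n:ℚ)+1) * ((N:ℚ) - ((n:ℚ)+1))) • TT N (n+1)
      = ∑ i ∈ Finset.range (n+1), TT N (n - i) * FreeAlgebra.ι ℚ (i+1) := by
  rw [TT, smul_smul, mul_inv_cancel₀ h, one_smul]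

/-! ### Triangle reindexing -/

lemma tri {A : Type*} [AddCommMonoid A] (M : ℕ) (F : ℕ → ℕ → A) :
    ∑ p ∈ range M, ∑ i ∈ range (p+1), F p i
      = ∑ q ∈ range M, ∑ i ∈ range (M - q), F (q+i) i := by
  rw [Finset.sum_sigma', Finset.sum_sigma']
  apply Finset.sum_nbij' (fun x => ⟨x.1 - x.2, x.2⟩) (fun x => ⟨x.1 + x.2, x.2⟩)
  · rintro ⟨p, i⟩ h
    simp only [Finset.mem_sigma, Finset.mem_range] at h ⊢
    omega
  · rintro ⟨q, i⟩ h
    simp only [Finset.mem_sigma, Finset.mem_range] at h ⊢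
    omega
  · rintro ⟨p, i⟩ h
    simp only [Finset.mem_sigma, Finset.mem_range] at h
    simp only [Sigma.mk.inj_iff, heq_eq_eq]
    exact ⟨Nat.sub_add_cancel (by omega), trivial⟩
  · rintro ⟨q, i⟩ h
    simp only [Sigma.mk.inj_iff, heq_eq_eq]
    exact ⟨by omega, trivial⟩
  · rintro ⟨p, i⟩ h
    simp only [Finset.mem_sigma, Finset.mem_range] at h
    have : p - i + i = p := Nat.sub_add_cancel (by omega)
    simp only [this]

/-! ### Splitting a composition at its last block -/

/-- Forward map: append a last block. -/
def toComp (n : ℕ) (x : (i : ℕ) × Composition (n - i)) (hx : x.1 < n + 1) :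
    Composition (n+1) where
  blocks := x.2.blocks ++ [x.1 + 1]
  blocks_pos := by
    intro i hi
    rcases List.mem_append.1 hi with h | h
    · exact x.2.blocks_pos h
    · simp at h; omega
  blocks_sum := by
    rw [List.sum_append, x.2.blocks_sum]
    simp
    omega

lemma comp_blocks_ne_nil {m : ℕ} (c : Composition (m+1)) : c.blocks ≠ [] := by
  intro h
  have := c.blocks_sum
  rw [h] at this
  simp at this

/-- Backward map: strip the last block. -/
def fromComp (n : ℕ) (c : Composition (n+1)) :
    (i : ℕ) × Composition (n - i) :=
  ⟨c.blocks.getLast (comp_blocks_ne_nil c) - 1,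
   { blocks := c.blocks.dropLast
     blocks_pos := fun h => c.blocks_pos (List.dropLast_subset _ h)
     blocks_sum := by
       have h1 := c.blocks_sum
       have h2 : c.blocks.dropLast.sum + c.blocks.getLast (comp_blocks_ne_nil c) = n + 1 := by
         conv_rhs => rw [← h1, ← List.dropLast_append_getLast (comp_blocks_ne_nil c)]
         rw [List.sum_append]; simp
       have h3 : 0 < c.blocks.getLast (comp_blocks_ne_nil c) :=
         c.blocks_pos (List.getLast_mem _)
       omega }⟩

lemma fromComp_fst_lt (n : ℕ) (c : Composition (n+1)) : (fromComp n c).1 < n + 1 := by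
  have h2 : c.blocks.dropLast.sum + c.blocks.getLast (comp_blocks_ne_nil c) = n + 1 := by
    conv_rhs => rw [← c.blocks_sum, ← List.dropLast_append_getLast (comp_blocks_ne_nil c)]
    rw [List.sum_append]; simp
  simp only [fromComp]
  omega

lemma sigma_comp_ext (n : ℕ) {i j : ℕ} (ci : Composition (n - i)) (cj : Composition (n - j))
    (hij : i = j) (hb : ci.blocks = cj.blocks) :
    (⟨i, ci⟩ : (k : ℕ) × Composition (n - k)) = ⟨j, cj⟩ := by
  subst hij
  exact congrArg _ (Composition.ext hb)

lemma comp_split {A : Type*} [AddCommMonoid A] (n : ℕ) (F : List ℕ → A) :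
    (∑ c : Composition (n+1), F c.blocks)
      = ∑ i ∈ range (n+1), ∑ c : Composition (n - i), F (c.blocks ++ [i+1]) := by
  rw [← Finset.sum_sigma (range (n+1)) (fun i => (univ : Finset (Composition (n - i))))
      (fun x => F (x.2.blocks ++ [x.1+1]))]
  refine (Finset.sum_bij' (fun x hx => toComp n x (by simpa using (Finset.mem_sigma.1 hx).1))
    (fun c _ => fromComp n c) (fun _ _ => Finset.mem_univ _)
    (fun c _ => by simp [fromComp_fst_lt n c]) ?_ ?_ ?_).symm
  · rintro ⟨i0, c0⟩ hx
    have hi0 : i0 < n + 1 := by simpa using (Finset.mem_sigma.1 hx).1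
    have hlast : (c0.blocks ++ [i0+1]).getLast (by simp) = i0 + 1 := List.getLast_append _
    refine sigma_comp_ext n _ _ ?_ ?_
    · show (c0.blocks ++ [i0+1]).getLast (by simp) - 1 = i0
      omega
    · show (c0.blocks ++ [i0+1]).dropLast = c0.blocks
      exact List.dropLast_concat
  · intro c _
    refine Composition.ext ?_
    show (fromComp n c).2.blocks ++ [(fromComp n c).1 + 1] = c.blocks
    simp only [fromComp]
    have h3 : 0 < c.blocks.getLast (comp_blocks_ne_nil c) :=
      c.blocks_pos (List.getLast_mem _)
    rw [Nat.sub_add_cancel h3]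
    exact List.dropLast_append_getLast (comp_blocks_ne_nil c)
  · intro x hx
    rfl

/-- Uniqueness of the composition of `0`. -/
lemma comp_zero_sum {A : Type*} [AddCommMonoid A] (F : List ℕ → A) :
    (∑ c : Composition 0, F c.blocks) = F [] := by
  have hb : ∀ c : Composition 0, c.blocks = [] := by
    intro c
    cases hb : c.blocks with
    | nil => rfl
    | cons a l =>
      exfalso
      have ha := c.blocks_pos (hb ▸ List.mem_cons_self (a := a) (l := l))
      have h := c.blocks_sum
      rw [hb] at h
      simp at h
      omega
  haveI : Unique (Composition 0) :=
    ⟨⟨⟨[], by simp, rfl⟩⟩, fun c => Composition.ext (hb c)⟩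
  rw [Fintype.sum_unique]
  exact congrArg F (hb _)

/-! ### Closed form for `TT` -/

/-- The weight `∏_k (S_k (N - S_k))⁻¹` over the partial sums of `l`. -/
noncomputable def wcoef (N : ℕ) (l : List ℕ) : ℚ :=
  ∏ k ∈ range l.length, ((((l.take (k+1)).sum : ℚ)) * ((N:ℚ) - ((l.take (k+1)).sum : ℚ)))⁻¹

lemma wcoef_nil (N : ℕ) : wcoef N [] = 1 := by simp [wcoef]

lemma wcoef_append (N : ℕ) (l : List ℕ) (b : ℕ) :
    wcoef N (l ++ [b])
      = wcoef N l * ((((l.sum + b : ℕ) : ℚ)) * ((N:ℚ) - ((l.sum + b : ℕ) : ℚ)))⁻¹ := by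
  unfold wcoef
  rw [List.length_append, List.length_singleton, Finset.prod_range_succ]
  congr 1
  · apply Finset.prod_congr rfl
    intro k hk
    rw [Finset.mem_range] at hk
    rw [List.take_append_of_le_length (by omega)]
  · rw [List.take_of_length_le (by simp), List.sum_append]
    simp

lemma TT_eq (N : ℕ) : ∀ n, TT N n
    = ∑ c : Composition n, wcoef N c.blocks • (c.blocks.map (FreeAlgebra.ι ℚ)).prod := by
  intro n
  induction n using Nat.strong_induction_on with
  | _ n IH =>
    match n with
    | 0 =>
      rw [TT_zero, comp_zero_sum (fun l => wcoef N l • (l.map (FreeAlgebra.ι ℚ)).prod)]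
      simp [wcoef_nil]
    | (n+1) =>
      rw [comp_split (n := n)
        (F := fun l => wcoef N l • (l.map (FreeAlgebra.ι ℚ)).prod), TT]
      rw [Finset.smul_sum]
      apply Finset.sum_congr rfl
      intro i hi
      rw [Finset.mem_range] at hi
      rw [IH (n - i) (by omega), Finset.sum_mul, Finset.smul_sum]
      apply Finset.sum_congr rfl
      intro c _
      have hsum : c.blocks.sum = n - i := c.blocks_sum
      have hsum2 : c.blocks.sum + (i+1) = n + 1 := by omega
      rw [wcoef_append, hsum2]
      rw [List.map_append, List.prod_append]
      simp only [List.map_singleton, List.prod_singleton]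
      rw [smul_mul_assoc, smul_smul]
      congr 1
      push_cast
      ring

/-! ### The key scalar identity -/

lemma CC_succ (N m : ℕ) :
    CC N (m+1) = CC N m * (((m:ℚ)+1) * ((N:ℚ) - ((m:ℚ)+1))) := by
  rw [CC, Finset.prod_range_succ]; rfl

lemma key (N m n : ℕ) (r : ℚ) (hn : (n : ℚ) = (m : ℚ) + 1 - r) (hnN : n < N) :
    (r * (r + (N:ℚ) - 2*(m:ℚ) - 2)) • (CC N m • TT N n)
      + ∑ i ∈ range n, (CC N m • TT N (n-1-i)) * FreeAlgebra.ι ℚ (i+1)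
      = CC N (m+1) • TT N n := by
  have hr : r = (m:ℚ) + 1 - (n:ℚ) := by linarith
  match n with
  | 0 =>
    simp only [range_zero, Finset.sum_empty, add_zero]
    rw [smul_smul, CC_succ]
    congr 1
    rw [hr]
    push_cast
    ring
  | (n'+1) =>
    have hnz : (((n':ℚ)+1) * ((N:ℚ) - ((n':ℚ)+1))) ≠ 0 := by
      have h1 : (0:ℚ) < (n':ℚ) + 1 := by positivity
      have h2 : (0:ℚ) < (N:ℚ) - ((n':ℚ)+1) := by
        have : (n' : ℚ) + 1 < (N : ℚ) := by exact_mod_cast hnN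
        linarith
      positivity
    have hsum : ∑ i ∈ range (n'+1), (CC N m • TT N (n'+1-1-i)) * FreeAlgebra.ι ℚ (i+1)
        = CC N m • ((((n':ℚ)+1) * ((N:ℚ) - ((n':ℚ)+1))) • TT N (n'+1)) := by
      rw [TT_succ_eq N n' hnz, Finset.smul_sum]
      apply Finset.sum_congr rfl
      intro i hi
      rw [smul_mul_assoc]
      rfl
    rw [hsum, smul_smul, smul_smul, CC_succ, ← add_smul]
    congr 1
    rw [hr]
    push_cast
    ring

/-! ### The main induction -/

lemma main_lemma (N : ℕ) : ∀ (m j : ℕ) (u : ℕ → FreeAlgebra ℚ ℕ), j + m + 1 = N →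
    (List.foldl (fun (u : ℕ → FreeAlgebra ℚ ℕ) (i : ℤ) => Lop ((N : ℤ) - 3 - 2 * i) u)
      u (List.map (fun n : ℕ => (n : ℤ)) (List.range' j m))) 0
      = ∑ p ∈ range (m+1), (CC N m • TT N (m-p)) * u p := by
  intro m
  induction m with
  | zero =>
    intro j u _
    simp [CC, TT_zero]
  | succ m IH =>
    intro j u hj
    rw [List.range'_succ, List.map_cons, List.foldl_cons]
    rw [IH (j+1) _ (by omega)]
    -- expand Lop
    have hk : (((N : ℤ) - 3 - 2 * (j : ℤ) : ℤ) : ℚ) = (N:ℚ) - 3 - 2*(j:ℚ) := by push_cast; ring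
    have expand : ∀ p, (Lop ((N : ℤ) - 3 - 2 * (j : ℤ)) u) p
        = (((p:ℚ)+1) * ((p:ℚ) + (N:ℚ) - 2*(m:ℚ) - 1)) • u (p+1)
          + ∑ i ∈ Finset.range (p + 1), FreeAlgebra.ι ℚ (i + 1) * u (p - i) := by
      intro p
      have hjm : (j : ℚ) = (N:ℚ) - (m:ℚ) - 2 := by
        have h2 : (j:ℚ) + ((m:ℚ) + 1) + 1 = (N:ℚ) := by exact_mod_cast hj
        linarith
      have hsc : ((p:ℚ) * ((p:ℚ)+1) - ((N:ℚ)-3-2*(j:ℚ)) * ((p:ℚ)+1))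
          = ((p:ℚ)+1) * ((p:ℚ) + (N:ℚ) - 2*(m:ℚ) - 1) := by
        rw [hjm]; ring
      rw [Lop, hk, hsc]
    simp only [expand]
    simp only [mul_add, Finset.sum_add_distrib, Finset.mul_sum]
    -- first piece: derivative terms
    have S1 : ∀ p, (CC N m • TT N (m-p)) * ((((p:ℚ)+1) * ((p:ℚ) + (N:ℚ) - 2*(m:ℚ) - 1)) • u (p+1))
        = ((((p:ℚ)+1) * ((p:ℚ) + (N:ℚ) - 2*(m:ℚ) - 1)) • (CC N m • TT N (m-p))) * u (p+1) := by
      intro p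
      simp only [mul_smul_comm, smul_mul_assoc]
    simp only [S1]
    -- second piece: reindex the triangle
    have S2 : ∑ p ∈ range (m+1), ∑ i ∈ range (p+1),
          (CC N m • TT N (m-p)) * (FreeAlgebra.ι ℚ (i + 1) * u (p - i))
        = ∑ q ∈ range (m+1), (∑ i ∈ range (m+1-q),
            (CC N m • TT N (m-q-i)) * FreeAlgebra.ι ℚ (i + 1)) * u q := by
      rw [tri (m+1) (fun p i => (CC N m • TT N (m-p)) * (FreeAlgebra.ι ℚ (i + 1) * u (p - i)))]
      apply Finset.sum_congr rfl
      intro q hq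
      rw [Finset.sum_mul]
      apply Finset.sum_congr rfl
      intro i hi
      rw [Finset.mem_range] at hq hi
      have h1 : q + i - i = q := by omega
      have h2 : m - (q+i) = m - q - i := by omega
      rw [h1, h2, mul_assoc]
    rw [S2]
    -- now match coefficients
    have hB : ∑ q ∈ range (m+1), (∑ i ∈ range (m+1-q),
          (CC N m • TT N (m-q-i)) * FreeAlgebra.ι ℚ (i + 1)) * u q
        = (∑ i ∈ range (m+1), (CC N m • TT N (m-i)) * FreeAlgebra.ι ℚ (i + 1)) * u 0
          + ∑ q ∈ range m, (∑ i ∈ range (m-q),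
              (CC N m • TT N (m-(q+1)-i)) * FreeAlgebra.ι ℚ (i + 1)) * u (q+1) := by
      rw [Finset.sum_range_succ' (fun q => (∑ i ∈ range (m+1-q),
          (CC N m • TT N (m-q-i)) * FreeAlgebra.ι ℚ (i + 1)) * u q) m]
      rw [add_comm]
      congr 1
      · simp
    rw [hB]
    have hmN : m + 2 ≤ N := by omega
    have hU0 : (∑ i ∈ range (m+1), (CC N m • TT N (m-i)) * FreeAlgebra.ι ℚ (i + 1)) * u 0
        = (CC N (m+1) • TT N (m+1)) * u 0 := by
      congr 1
      have hkey := key N m (m+1) 0 (by push_cast; ring) (by omega)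
      simp only [zero_mul, zero_smul, zero_add] at hkey
      rw [← hkey]
      apply Finset.sum_congr rfl
      intro i hi
      congr 2
    have hU1 : ∑ q ∈ range (m+1),
          ((((q:ℚ)+1) * ((q:ℚ) + (N:ℚ) - 2*(m:ℚ) - 1)) • (CC N m • TT N (m-q))) * u (q+1)
          + ∑ q ∈ range m, (∑ i ∈ range (m-q),
              (CC N m • TT N (m-(q+1)-i)) * FreeAlgebra.ι ℚ (i + 1)) * u (q+1)
        = ∑ q ∈ range (m+1), (CC N (m+1) • TT N (m+1-(q+1))) * u (q+1) := by
      have hextend : ∑ q ∈ range m, (∑ i ∈ range (m-q),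
            (CC N m • TT N (m-(q+1)-i)) * FreeAlgebra.ι ℚ (i + 1)) * u (q+1)
          = ∑ q ∈ range (m+1), (∑ i ∈ range (m-q),
            (CC N m • TT N (m-(q+1)-i)) * FreeAlgebra.ι ℚ (i + 1)) * u (q+1) := by
        rw [Finset.sum_range_succ]
        simp
      rw [hextend, ← Finset.sum_add_distrib]
      apply Finset.sum_congr rfl
      intro q hq
      rw [Finset.mem_range] at hq
      rw [← add_mul]
      congr 1
      have hkey := key N m (m-q) (((q:ℚ))+1) (by
        have hc : ((m - q : ℕ) : ℚ) = (m:ℚ) - (q:ℚ) := by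
          have hqm : q ≤ m := by omega
          push_cast [hqm]
          ring
        rw [hc]; ring) (by omega)
      have harg : ∀ i : ℕ, m - (q+1) - i = (m-q) - 1 - i := by intro i; omega
      calc (((q:ℚ)+1) * ((q:ℚ) + (N:ℚ) - 2*(m:ℚ) - 1)) • (CC N m • TT N (m-q))
            + ∑ i ∈ range (m-q), (CC N m • TT N (m-(q+1)-i)) * FreeAlgebra.ι ℚ (i + 1)
          = (((q:ℚ)+1) * (((q:ℚ)+1) + (N:ℚ) - 2*(m:ℚ) - 2)) • (CC N m • TT N (m-q))
            + ∑ i ∈ range (m-q), (CC N m • TT N ((m-q)-1-i)) * FreeAlgebra.ι ℚ (i + 1) := by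
            have hsc2 : (((q:ℚ)+1) * ((q:ℚ) + (N:ℚ) - 2*(m:ℚ) - 1))
                = (((q:ℚ)+1) * (((q:ℚ)+1) + (N:ℚ) - 2*(m:ℚ) - 2)) := by ring
            rw [hsc2]
            rfl
        _ = CC N (m+1) • TT N (m-q) := hkey
        _ = CC N (m+1) • TT N (m+1-(q+1)) := by
            congr 2
            omega
    rw [Finset.sum_range_succ' (fun q => (CC N (m+1) • TT N (m+1-q)) * u q) (m+1)]
    simp only [Nat.sub_zero]
    rw [← hU1, ← hU0]
    abel

/-! ### Final assembly -/

lemma prod_range_add_one (n : ℕ) : ∏ j ∈ range n, (j + 1) = Nat.factorial n := by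
  induction n with
  | zero => simp
  | succ k ih => rw [Finset.prod_range_succ, ih, Nat.factorial_succ]; ring

lemma prod_range_sub (n : ℕ) : ∏ i ∈ range n, (n - i) = Nat.factorial n := by
  have h := Finset.prod_range_reflect (fun j => j + 1) n
  have h' : ∏ i ∈ range n, (n - i) = ∏ j ∈ range n, (n - 1 - j + 1) := by
    apply Finset.prod_congr rfl
    intro i hi
    rw [Finset.mem_range] at hi
    omega
  rw [h', h, prod_range_add_one]

lemma CC_fact (N : ℕ) : CC N (N-1) = ((Nat.factorial (N - 1) : ℚ))^2 := by
  rw [CC, pow_two]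
  have h1 : ∏ k ∈ range (N-1), ((k:ℚ)+1) = ((Nat.factorial (N-1)) : ℚ) := by
    rw [← prod_range_add_one (N-1)]
    push_cast
    ring
  have h2 : ∏ k ∈ range (N-1), ((N:ℚ) - ((k:ℚ)+1)) = ((Nat.factorial (N-1)) : ℚ) := by
    have hcast : ∀ k ∈ range (N-1), ((N:ℚ) - ((k:ℚ)+1)) = (((N-1-k : ℕ)) : ℚ) := by
      intro k hk
      rw [Finset.mem_range] at hk
      have h3 : (N - 1 - k : ℕ) = N - (k+1) := by omega
      rw [h3, Nat.cast_sub (by omega)]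
      push_cast
      ring
    rw [Finset.prod_congr rfl hcast, ← Nat.cast_prod, prod_range_sub]
  rw [Finset.prod_mul_distrib, h1, h2]

lemma nbar_eq (N a : ℕ) (ha : 1 ≤ a) (haN : a ≤ N) (l : List ℕ) (hl : l.sum = N - a) :
    nbar N (l ++ [a]) = CC N (N-1) * wcoef N l := by
  rw [nbar, CC_fact, wcoef, div_eq_mul_inv, ← Finset.prod_inv_distrib]
  congr 1
  rw [show (l ++ [a]).length - 1 = l.length by simp]
  apply Finset.prod_congr rfl
  intro k hk
  rw [Finset.mem_range] at hk
  have htake : (l ++ [a]).take (k+1) = l.take (k+1) :=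
    List.take_append_of_le_length (by omega)
  have hts : (l.take (k+1)).sum + (l.drop (k+1)).sum = l.sum := by
    rw [← List.sum_append, List.take_append_drop]
  have hdrop : ((l ++ [a]).drop (k+1)).sum = N - (l.take (k+1)).sum := by
    rw [List.drop_append_of_le_length (by omega), List.sum_append]
    simp only [List.sum_cons, List.sum_nil]
    omega
  rw [htake, hdrop, Nat.cast_sub (by omega)]

/-- Proposition `modrecurcons` (combinatorial form): for `1 ≤ a ≤ N`,
`L_{1-N} L_{3-N} ⋯ L_{N-3} (s^{a-1}) |_{s=0} = ∑_{|I|=N-a} n̄_{(I,a)} x_{I_1} ⋯ x_{I_r}`,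
the sum being over all compositions `I` of `N - a` (including the empty one when `a = N`). -/
theorem Lop_iterate_pow (N a : ℕ) (hN : 1 ≤ N) (ha : 1 ≤ a) (haN : a ≤ N) :
    ((List.range (N - 1)).foldl (fun u i => Lop ((N : ℤ) - 3 - 2 * (i : ℤ)) u)
        (fun j => if j = a - 1 then 1 else 0)) 0
      = ∑ c : Composition (N - a),
          nbar N (c.blocks ++ [a]) • (c.blocks.map (FreeAlgebra.ι ℚ)).prod := by
  have hlist : ∀ l : List ℕ, (do let x ← l; pure ((x:ℤ))) = List.map (fun n : ℕ => (n : ℤ)) l := by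
    intro l
    induction l with
    | nil => rfl
    | cons x xs ih => simpa using ih
  show (List.foldl (fun (u : ℕ → FreeAlgebra ℚ ℕ) (i : ℤ) => Lop ((N : ℤ) - 3 - 2 * i) u)
      (fun j => if j = a - 1 then 1 else 0) (do let x ← List.range (N-1); pure ((x:ℤ)))) 0 = _
  rw [hlist, List.range_eq_range']
  rw [main_lemma N (N-1) 0 (fun j => if j = a - 1 then 1 else 0) (by omega)]
  rw [Finset.sum_eq_single (a-1)]
  · have hif : (if a - 1 = a - 1 then (1 : FreeAlgebra ℚ ℕ) else 0) = 1 := if_pos rfl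
    rw [hif, mul_one]
    have hidx : (N-1) - (a-1) = N - a := by omega
    rw [hidx, TT_eq N (N-a), Finset.smul_sum]
    apply Finset.sum_congr rfl
    intro c _
    rw [smul_smul]
    congr 1
    rw [nbar_eq N a ha haN c.blocks c.blocks_sum]
  · intro p _ hpa
    simp only [if_neg hpa, mul_zero]
  · intro h
    exfalso
    apply h
    rw [Finset.mem_range]
    omega
end

section
/- Define rational numbers c_{j,l} for j ≥ 0, 0 ≤ l ≤ r by: c_{0,0} = 1; c_{j,0} = 0 for j ≥ 1; c_{0,l} = 0 for l ≥ 1; and the recursion c_{j+1,l} = −(m_l − j)(N − m_l − j) c_{j,l} + c_{j,l−1} for j ≥ 0, 1 ≤ l ≤ r, where 1 ≤ m_1 < m_2 < ⋯ < m_r = N are fixed integers. Then c_{N,r} = (N−1)!² / ∏_{k=1}^{r−1} (m_k (N − m_k)). -/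
open Finset

/-- Adjoint/backward sequence: `piAux N r m k l` is the weight `π_{N-k, l}` defined by
`π_{N,l} = δ_{l,r}` and `π_{j,l} = b_l(j) π_{j+1,l} + π_{j+1,l+1}` (with `π_{·,r+1} = 0`),
where `b_l(j) = -(m_l - j)(N - m_l - j)`. -/
def piAux (N r : ℕ) (m : ℕ → ℕ) : ℕ → ℕ → ℚ
  | 0 => fun l => if l = r then 1 else 0
  | (k+1) => fun l =>
      (-((m l : ℚ) - ((N - (k+1) : ℕ) : ℚ)) * ((N : ℚ) - (m l : ℚ) - ((N - (k+1) : ℕ) : ℚ)))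
        * piAux N r m k l
      + (if l < r then piAux N r m k (l+1) else 0)

lemma piAux_zero (N r : ℕ) (m : ℕ → ℕ) (l : ℕ) :
    piAux N r m 0 l = if l = r then 1 else 0 := rfl

lemma piAux_succ (N r : ℕ) (m : ℕ → ℕ) (k l : ℕ) :
    piAux N r m (k+1) l =
      (-((m l : ℚ) - ((N - (k+1) : ℕ) : ℚ)) * ((N : ℚ) - (m l : ℚ) - ((N - (k+1) : ℕ) : ℚ)))
        * piAux N r m k l
      + (if l < r then piAux N r m k (l+1) else 0) := rfl

/-- The two-dimensional recursion for the constants `c_{j,l}`: with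
`1 ≤ m_1 < ⋯ < m_r = N`, boundary values `c_{0,0} = 1`, `c_{j,0} = 0` for `j ≥ 1`,
`c_{0,l} = 0` for `l ≥ 1`, and
`c_{j+1,l} = -(m_l - j)(N - m_l - j) c_{j,l} + c_{j,l-1}`, one has
`c_{N,r} = (N-1)!² / ∏_{k=1}^{r-1} m_k (N - m_k)`. -/
theorem c_N_r_eq (N r : ℕ) (hN : 0 < N) (hr : 1 ≤ r) (m : ℕ → ℕ)
    (hm1 : 1 ≤ m 1) (hmono : ∀ k l, 1 ≤ k → k < l → l ≤ r → m k < m l) (hmr : m r = N)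
    (c : ℕ → ℕ → ℚ)
    (hc00 : c 0 0 = 1)
    (hcj0 : ∀ j, 1 ≤ j → c j 0 = 0)
    (hc0l : ∀ l, 1 ≤ l → l ≤ r → c 0 l = 0)
    (hrec : ∀ j l, 1 ≤ l → l ≤ r →
      c (j+1) l = -((m l : ℚ) - (j : ℚ)) * ((N : ℚ) - (m l : ℚ) - (j : ℚ)) * c j l
        + c j (l-1)) :
    c N r = ((Nat.factorial (N - 1) : ℚ))^2
        / ∏ k ∈ Finset.Icc 1 (r - 1), ((m k : ℚ) * ((N : ℚ) - (m k : ℚ))) := by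
  have hm_pos : ∀ l, 1 ≤ l → l ≤ r → 1 ≤ m l := by
    intro l h1 hlr
    rcases eq_or_lt_of_le h1 with h | h
    · rw [← h]; exact hm1
    · exact le_trans hm1 (le_of_lt (hmono 1 l le_rfl h hlr))
  have hm_lt : ∀ l, 1 ≤ l → l < r → m l < N := by
    intro l h1 hlr
    have := hmono l r h1 hlr le_rfl
    omega
  -- Key lemma: for `j = N - k ≤ m l`, `m_l (N - m_l) π_{j,l} = π_{j,l+1}`.
  have key : ∀ k, k ≤ N → ∀ l, 1 ≤ l → l ≤ r → N - k ≤ m l →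
      ((m l : ℚ) * ((N : ℚ) - (m l : ℚ))) * piAux N r m k l
        = (if l < r then piAux N r m k (l+1) else 0) := by
    intro k
    induction k with
    | zero =>
      intro _ l h1 hlr hml
      by_cases hl : l < r
      · exact absurd hml (by have := hm_lt l h1 hl; omega)
      · have hlr' : l = r := le_antisymm hlr (not_lt.1 hl)
        subst hlr'
        rw [if_neg hl, hmr]
        ring
    | succ k ih =>
      intro hkN l h1 hlr hml
      have hkN' : k ≤ N := by omega
      by_cases hl : l < r
      · have hll1 : m l < m (l+1) := hmono l (l+1) h1 (Nat.lt_succ_self l) hl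
        rw [if_pos hl, piAux_succ, piAux_succ, if_pos hl]
        rcases le_or_gt (N - k) (m l) with hc | hc
        · have IH1 := ih hkN' l h1 hlr hc
          rw [if_pos hl] at IH1
          have IH2 := ih hkN' (l+1) (by omega) hl (by omega)
          linear_combination
            (-((m l : ℚ) - ((N - (k+1) : ℕ) : ℚ))
              * ((N : ℚ) - (m l : ℚ) - ((N - (k+1) : ℕ) : ℚ))) * IH1 + IH2
        · have hmlj : m l = N - (k+1) := by omega
          have hcast : (m l : ℚ) = ((N - (k+1) : ℕ) : ℚ) := by exact_mod_cast hmlj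
          have IH2 := ih hkN' (l+1) (by omega) hl (by omega)
          rw [hcast]
          linear_combination IH2
      · have hlr' : l = r := le_antisymm hlr (not_lt.1 hl)
        subst hlr'
        rw [if_neg hl, hmr]
        ring
  -- values of c at j = 1
  have hc1 : ∀ l, 1 ≤ l → l ≤ r → c 1 l = if l = 1 then 1 else 0 := by
    intro l h1l hlr
    have h := hrec 0 l h1l hlr
    rw [hc0l l h1l hlr] at h
    rcases eq_or_ne l 1 with h1 | h1
    · subst h1
      rw [if_pos rfl]
      simpa [hc00] using h
    · rw [hc0l (l-1) (by omega) (by omega)] at h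
      rw [if_neg h1]
      simpa using h
  -- Invariance of the pairing sum
  have inv : ∀ j, 1 ≤ j → j ≤ N →
      (∑ i ∈ range r, piAux N r m (N - j) (i+1) * c j (i+1)) = piAux N r m (N - 1) 1 := by
    intro j hj
    induction j, hj using Nat.le_induction with
    | base =>
      intro _
      have hs : (∑ i ∈ range r, piAux N r m (N - 1) (i+1) * c 1 (i+1))
          = piAux N r m (N - 1) (0+1) * c 1 (0+1) := by
        refine Finset.sum_eq_single 0 ?_ ?_
        · intro b hb hbne
          rw [mem_range] at hb
          rw [hc1 (b+1) (by omega) (by omega), if_neg (by omega), mul_zero]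
        · intro hnot
          exact absurd (mem_range.2 (by omega)) hnot
      rw [hs]
      have : c 1 (0+1) = 1 := by rw [hc1 1 le_rfl hr, if_pos rfl]
      rw [this, mul_one]
    | succ j hj ihj =>
      intro hjN
      rw [← ihj (by omega)]
      have hNj : N - j = (N - (j+1)) + 1 := by omega
      have hNj2 : N - (N - (j+1) + 1) = j := by omega
      rw [hNj]
      simp only [piAux_succ, hNj2]
      have L1 : (∑ i ∈ range r, piAux N r m (N - (j+1)) (i+1) * c (j+1) (i+1))
          = ∑ i ∈ range r,
            ((-((m (i+1) : ℚ) - (j : ℚ)) * ((N : ℚ) - (m (i+1) : ℚ) - (j : ℚ)))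
                * piAux N r m (N - (j+1)) (i+1) * c j (i+1)
              + piAux N r m (N - (j+1)) (i+1) * c j i) := by
        refine Finset.sum_congr rfl fun i hi => ?_
        rw [mem_range] at hi
        rw [hrec j (i+1) (by omega) (by omega), Nat.add_sub_cancel]
        ring
      rw [L1, Finset.sum_add_distrib]
      have R1 : (∑ i ∈ range r,
            ((-((m (i+1) : ℚ) - (j : ℚ)) * ((N : ℚ) - (m (i+1) : ℚ) - (j : ℚ)))
                * piAux N r m (N - (j+1)) (i+1)
              + (if i+1 < r then piAux N r m (N - (j+1)) (i+1+1) else 0)) * c j (i+1))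
          = ∑ i ∈ range r,
            ((-((m (i+1) : ℚ) - (j : ℚ)) * ((N : ℚ) - (m (i+1) : ℚ) - (j : ℚ)))
                * piAux N r m (N - (j+1)) (i+1) * c j (i+1)
              + (if i+1 < r then piAux N r m (N - (j+1)) (i+1+1) else 0) * c j (i+1)) := by
        refine Finset.sum_congr rfl fun i _ => by ring
      rw [R1, Finset.sum_add_distrib]
      congr 1
      -- remaining: shift identity
      obtain ⟨s, hs⟩ : ∃ s, r = s + 1 := ⟨r-1, by omega⟩
      subst hs
      rw [Finset.sum_range_succ'
        (f := fun i => piAux N (s+1) m (N - (j+1)) (i+1) * c j i)]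
      rw [Finset.sum_range_succ
        (f := fun i => (if i+1 < s+1 then piAux N (s+1) m (N - (j+1)) (i+1+1) else 0) * c j (i+1))]
      rw [hcj0 j hj, mul_zero, add_zero, if_neg (lt_irrefl _), zero_mul, add_zero]
      refine Finset.sum_congr rfl fun i hi => ?_
      rw [mem_range] at hi
      rw [if_pos (by omega)]
  -- the sum at j = N equals c N r
  have hSN : c N r = piAux N r m (N - 1) 1 := by
    have h := inv N hN le_rfl
    rw [Nat.sub_self] at h
    simp only [piAux_zero] at h
    have h2 : (∑ i ∈ range r, (if i+1 = r then (1:ℚ) else 0) * c N (i+1)) = c N r := by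
      have h3 : (∑ i ∈ range r, (if i+1 = r then (1:ℚ) else 0) * c N (i+1))
          = (if (r-1)+1 = r then (1:ℚ) else 0) * c N ((r-1)+1) := by
        refine Finset.sum_eq_single (r-1) ?_ ?_
        · intro b hb hbne
          rw [mem_range] at hb
          rw [if_neg (by omega), zero_mul]
        · intro hnot
          exact absurd (mem_range.2 (by omega)) hnot
      rw [h3, if_pos (by omega : (r-1)+1 = r), one_mul, show (r-1)+1 = r from by omega]
    rw [h2] at h
    exact h
  -- chain: π_{1,l} = π_{1,1} * ∏_{k=1}^{l-1} m_k (N - m_k)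
  have chain : ∀ l, 1 ≤ l → l ≤ r →
      piAux N r m (N - 1) l
        = piAux N r m (N - 1) 1 * ∏ k ∈ Finset.Icc 1 (l-1), ((m k : ℚ) * ((N : ℚ) - (m k : ℚ))) := by
    intro l hl
    induction l, hl using Nat.le_induction with
    | base =>
      intro _
      rw [show (1:ℕ)-1 = 0 from rfl, Finset.Icc_eq_empty (by omega), Finset.prod_empty, mul_one]
    | succ l hl ihl =>
      intro hlr
      have hkey := key (N-1) (by omega) l hl (by omega)
        (by have := hm_pos l hl (by omega); omega)
      rw [if_pos (by omega : l < r)] at hkey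
      rw [← hkey, ihl (by omega)]
      rw [show (l+1)-1 = (l-1)+1 from by omega,
        Finset.prod_Icc_succ_top (show 1 ≤ (l-1)+1 from by omega),
        show (l-1)+1 = l from by omega]
      ring
  -- top row: π_{j,r} = ∏_{t=j}^{N-1} t (N - t)
  have top : ∀ k, k ≤ N →
      piAux N r m k r = ∏ t ∈ Finset.Ico (N-k) N, ((t : ℚ) * ((N : ℚ) - (t : ℚ))) := by
    intro k
    induction k with
    | zero =>
      intro _
      rw [Nat.sub_zero, Finset.Ico_self, Finset.prod_empty, piAux_zero, if_pos rfl]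
    | succ k ih =>
      intro hk
      rw [piAux_succ, if_neg (lt_irrefl r), add_zero, ih (by omega)]
      rw [Finset.prod_eq_prod_Ico_succ_bot (show N-(k+1) < N from by omega)]
      rw [show N-(k+1)+1 = N-k from by omega, hmr]
      ring
  -- factorial evaluation
  have fact2 : (∏ t ∈ Finset.Ico 1 N, ((t : ℚ) * ((N : ℚ) - (t : ℚ))))
      = ((Nat.factorial (N - 1) : ℚ))^2 := by
    have h1 : ∀ t ∈ Finset.Ico 1 N, ((t : ℚ) * ((N : ℚ) - (t : ℚ))) = ((t * (N - t) : ℕ) : ℚ) := by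
      intro t ht
      rw [Finset.mem_Ico] at ht
      push_cast [Nat.cast_sub (le_of_lt ht.2)]
      ring
    rw [Finset.prod_congr rfl h1, ← Nat.cast_prod]
    have hid : (∏ t ∈ Finset.Ico 1 (N-1+1), t) = Nat.factorial (N-1) :=
      Finset.prod_Ico_id_eq_factorial (N-1)
    rw [show N-1+1 = N from by omega] at hid
    have hrefl : (∏ t ∈ Finset.Ico 1 N, (N - t)) = ∏ t ∈ Finset.Ico (N+1-N) (N+1-1), t :=
      Finset.prod_Ico_reflect (fun t => t) 1 (by omega)
    rw [show N+1-N = 1 from by omega, show N+1-1 = N from by omega] at hrefl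
    have h2 : (∏ t ∈ Finset.Ico 1 N, t * (N - t))
        = Nat.factorial (N-1) * Nat.factorial (N-1) := by
      rw [Finset.prod_mul_distrib, hid, hrefl, hid]
    rw [h2]
    push_cast
    ring
  -- assemble
  have hne : (∏ k ∈ Finset.Icc 1 (r - 1), ((m k : ℚ) * ((N : ℚ) - (m k : ℚ)))) ≠ 0 := by
    refine Finset.prod_ne_zero_iff.2 fun k hk => ?_
    rw [Finset.mem_Icc] at hk
    have h1 : 1 ≤ m k := hm_pos k hk.1 (by omega)
    have h2 : m k < N := hm_lt k hk.1 (by omega)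
    refine mul_ne_zero ?_ ?_
    · exact Nat.cast_ne_zero.2 (by omega)
    · have : (m k : ℚ) < (N : ℚ) := by exact_mod_cast h2
      exact sub_ne_zero.2 (ne_of_gt this)
  rw [hSN, eq_div_iff hne]
  have hch := chain r hr le_rfl
  have htop := top (N-1) (by omega)
  rw [show N - (N-1) = 1 from by omega] at htop
  rw [← hch, htop]
  exact fact2
end
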